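/- Let u be a λ-mode solution with initial data (0,ψ), where ψ is smooth and compactly supported in (2M,∞). If the zero function is a forward radiation field of u at the event horizon (i.e., for every τ ∈ ℝ, ∂ₜu(τ − r_*(r), r) → 0 as r → 2M from the right), then ψ = 0 identically on (2M,∞). (Event-horizon half of Corollary 1.4, for a single spherical-harmonic mode.) -/

import Mathlib

open MeasureTheory Filter Set Function
open scoped ContDiff

/-- The tortoise coordinate `r_* = r + 2M log(r - 2M)`. -/
noncomputable def rstar (M r : ℝ) : ℝ := r + 2*M*Real.log (r - 2*M)

/-- Partial derivative of `u` in the first (time) variable. -/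
noncomputable def pdt (u : ℝ → ℝ → ℝ) (t r : ℝ) : ℝ := deriv (fun s => u s r) t

/-- Second partial derivative of `u` in the first (time) variable. -/
noncomputable def pdtt (u : ℝ → ℝ → ℝ) (t r : ℝ) : ℝ := deriv (fun s => pdt u s r) t

/-- Partial derivative of `u` in the second (radial) variable. -/
noncomputable def pdr (u : ℝ → ℝ → ℝ) (t r : ℝ) : ℝ := deriv (fun s => u t s) r

/-- Second partial derivative of `u` in the second (radial) variable. -/
noncomputable def pdrr (u : ℝ → ℝ → ℝ) (t r : ℝ) : ℝ := deriv (fun s => pdr u t s) r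

/-- `u(t,r)` is a λ-mode solution of the wave equation on the mass-`M`
Schwarzschild exterior: it is smooth on `ℝ × (2M,∞)` and satisfies
`−(r/(r−2M))·∂²ₜu + ((r−2M)/r)·∂²ᵣu + (2(r−M)/r²)·∂ᵣu − (λ²/r²)·u = 0` there. -/
def IsModeSolution (M lam : ℝ) (u : ℝ → ℝ → ℝ) : Prop :=
  ContDiffOn ℝ ∞ (Function.uncurry u) ((Set.univ : Set ℝ) ×ˢ Set.Ioi (2*M)) ∧
  ∀ t r : ℝ, 2*M < r →
    -(r/(r-2*M)) * pdtt u t r + ((r-2*M)/r) * pdrr u t r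
      + (2*(r-M)/r^2) * pdr u t r - lam^2/r^2 * u t r = 0

/-- `f` is a forward radiation field of `u` at the event horizon:
`∂ₜu(τ − r_*(r), r) → f(τ)` as `r → 2M⁺`. -/
def IsFwdRadHorizon (M : ℝ) (u : ℝ → ℝ → ℝ) (f : ℝ → ℝ) : Prop :=
  ∀ τ : ℝ, Filter.Tendsto (fun r => pdt u (τ - rstar M r) r)
    (nhdsWithin (2*M) (Set.Ioi (2*M))) (nhds (f τ))

/-- `f` is a backward radiation field of `u` at the event horizon:
`∂ₜu(τ + r_*(r), r) → f(τ)` as `r → 2M⁺`. -/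
def IsBwdRadHorizon (M : ℝ) (u : ℝ → ℝ → ℝ) (f : ℝ → ℝ) : Prop :=
  ∀ τ : ℝ, Filter.Tendsto (fun r => pdt u (τ + rstar M r) r)
    (nhdsWithin (2*M) (Set.Ioi (2*M))) (nhds (f τ))

/-- `g` is a forward radiation field of `u` at null infinity:
`r·∂ₜu(τ̄ + r_*(r), r) → g(τ̄)` as `r → ∞`. -/
def IsFwdRadInfty (M : ℝ) (u : ℝ → ℝ → ℝ) (g : ℝ → ℝ) : Prop :=
  ∀ τ : ℝ, Filter.Tendsto (fun r => r * pdt u (τ + rstar M r) r)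
    Filter.atTop (nhds (g τ))

/-- `g` is a backward radiation field of `u` at null infinity:
`r·∂ₜu(τ̄ − r_*(r), r) → g(τ̄)` as `r → ∞`. -/
def IsBwdRadInfty (M : ℝ) (u : ℝ → ℝ → ℝ) (g : ℝ → ℝ) : Prop :=
  ∀ τ : ℝ, Filter.Tendsto (fun r => r * pdt u (τ - rstar M r) r)
    Filter.atTop (nhds (g τ))

open intervalIntegral


noncomputable def Hfun (c κ y : ℝ) : ℝ := c/(2*κ) * Real.exp (κ*y)

lemma Hfun_deriv (c κ : ℝ) (hκ : 0 < κ) (y : ℝ) :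
    HasDerivAt (Hfun c κ) (c/2 * Real.exp (κ*y)) y := by
  have h1 : HasDerivAt (fun y : ℝ => κ*y) κ y := by
    simpa using (hasDerivAt_id y).const_mul κ
  have h2 := h1.exp
  have h3 := h2.const_mul (c/(2*κ))
  refine h3.congr_deriv ?_
  field_simp

lemma Hfun_nonneg (c κ y : ℝ) (hκ : 0 < κ) (hc : 0 ≤ c) : 0 ≤ Hfun c κ y := by
  have := Real.exp_pos (κ*y)
  have : (0:ℝ) ≤ c/(2*κ) := by positivity
  unfold Hfun; positivity

lemma Hfun_mono (c κ : ℝ) (hκ : 0 < κ) (hc : 0 ≤ c) {y z : ℝ} (h : y ≤ z) :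
    Hfun c κ y ≤ Hfun c κ z := by
  unfold Hfun
  have : Real.exp (κ*y) ≤ Real.exp (κ*z) := by
    apply Real.exp_le_exp.2; nlinarith
  have h0 : (0:ℝ) ≤ c/(2*κ) := by positivity
  nlinarith

section Core

variable {η A B : ℝ → ℝ → ℝ} {V G χ : ℝ → ℝ} {c κ K x₁ x₂ : ℝ}

/-- FTC along `a`-lines. -/
lemma ftcA (hA : ∀ b a, HasDerivAt (fun a' => η a' b) (A a b) a)
    (hAc : Continuous (uncurry A)) (p q b : ℝ) :
    ∫ α in p..q, A α b = η q b - η p b := by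
  apply integral_eq_sub_of_hasDerivAt (fun x _ => hA b x)
  exact (hAc.comp (continuous_id.prodMk continuous_const)).intervalIntegrable p q

/-- FTC along `b`-lines for `A`. -/
lemma ftcAb (hAb : ∀ a b, HasDerivAt (fun b' => A a b') (-(1/4) * V ((a-b)/2) * η a b) b)
    (hVc : Continuous V) (hηc : Continuous (uncurry η)) (a p q : ℝ) :
    ∫ β in p..q, (-(1/4) * V ((a-β)/2) * η a β) = A a q - A a p := by
  apply integral_eq_sub_of_hasDerivAt (fun x _ => hAb a x)
  apply Continuous.intervalIntegrable
  exact (continuous_const.mul (hVc.comp (by fun_prop))).mul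
    (hηc.comp (continuous_const.prodMk continuous_id))

/-- FTC along `a`-lines for `B`. -/
lemma ftcB (hBa : ∀ b a, HasDerivAt (fun a' => B a' b) (-(1/4) * V ((a-b)/2) * η a b) a)
    (hVc : Continuous V) (hηc : Continuous (uncurry η)) (b p q : ℝ) :
    ∫ α in p..q, (-(1/4) * V ((α-b)/2) * η α b) = B q b - B p b := by
  apply integral_eq_sub_of_hasDerivAt (fun x _ => hBa b x)
  apply Continuous.intervalIntegrable
  exact (continuous_const.mul (hVc.comp (by fun_prop))).mul
    (hηc.comp (continuous_id.prodMk continuous_const))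

/-- integral of the potential along a `b`-segment at fixed `a`. -/
lemma Gint (hG : ∀ y, HasDerivAt G (V y) y) (hVc : Continuous V) (a p q : ℝ) :
    ∫ β in p..q, V ((a-β)/2) = 2*(G ((a-p)/2) - G ((a-q)/2)) := by
  have key : ∀ x : ℝ, HasDerivAt (fun β : ℝ => -2 * G ((a-β)/2)) (V ((a-x)/2)) x := by
    intro x
    have h1 : HasDerivAt (fun β : ℝ => (a-β)/2) (-(1/2)) x := by
      have := ((hasDerivAt_id x).const_sub a).div_const 2
      refine this.congr_deriv ?_; norm_num
    have h2 := (hG ((a-x)/2)).comp x h1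
    have h3 := h2.const_mul (-2 : ℝ)
    refine h3.congr_deriv ?_; ring
  rw [integral_eq_sub_of_hasDerivAt (fun x _ => key x)
    ((hVc.comp (by fun_prop)).intervalIntegrable p q)]
  ring

/-- integral of the potential along an `a`-segment at fixed `b`. -/
lemma Gint2 (hG : ∀ y, HasDerivAt G (V y) y) (hVc : Continuous V) (b p q : ℝ) :
    ∫ α in p..q, V ((α-b)/2) = 2*(G ((q-b)/2) - G ((p-b)/2)) := by
  have key : ∀ x : ℝ, HasDerivAt (fun α : ℝ => 2 * G ((α-b)/2)) (V ((x-b)/2)) x := by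
    intro x
    have h1 : HasDerivAt (fun α : ℝ => (α-b)/2) (1/2) x := by
      simpa using ((hasDerivAt_id x).sub_const b).div_const 2
    have h2 := (hG ((x-b)/2)).comp x h1
    have h3 := h2.const_mul (2 : ℝ)
    refine h3.congr_deriv ?_; ring
  rw [integral_eq_sub_of_hasDerivAt (fun x _ => key x)
    ((hVc.comp (by fun_prop)).intervalIntegrable p q)]
  ring

end Core

noncomputable def bdf (c κ c₁ N : ℝ) (n : ℕ) (y : ℝ) : ℝ :=
  c₁ * (∑ k ∈ Finset.range n, Hfun c κ y ^ k / k.factorial)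
    + N * Hfun c κ y ^ n / n.factorial

noncomputable def FF (c κ c₁ N : ℝ) (n : ℕ) (y : ℝ) : ℝ :=
  c₁ * (∑ k ∈ Finset.range n, Hfun c κ y ^ (k+1) / (k+1).factorial)
    + N * Hfun c κ y ^ (n+1) / (n+1).factorial

lemma bdf_nonneg {c κ c₁ N : ℝ} (hκ : 0 < κ) (hc : 0 ≤ c) (hc₁ : 0 ≤ c₁) (hN0 : 0 ≤ N)
    (n : ℕ) (y : ℝ) : 0 ≤ bdf c κ c₁ N n y := by
  have hH := Hfun_nonneg c κ y hκ hc
  unfold bdf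
  have h1 : 0 ≤ ∑ k ∈ Finset.range n, Hfun c κ y ^ k / k.factorial := by
    apply Finset.sum_nonneg; intro k _; positivity
  positivity

lemma FF_nonneg {c κ c₁ N : ℝ} (hκ : 0 < κ) (hc : 0 ≤ c) (hc₁ : 0 ≤ c₁) (hN0 : 0 ≤ N)
    (n : ℕ) (y : ℝ) : 0 ≤ FF c κ c₁ N n y := by
  have hH := Hfun_nonneg c κ y hκ hc
  unfold FF
  have h1 : 0 ≤ ∑ k ∈ Finset.range n, Hfun c κ y ^ (k+1) / (k+1).factorial := by
    apply Finset.sum_nonneg; intro k _; positivity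
  positivity

lemma bdf_cont {c κ c₁ N : ℝ} (n : ℕ) : Continuous (bdf c κ c₁ N n) := by
  unfold bdf Hfun
  fun_prop

lemma bdf_succ {c κ c₁ N : ℝ} (n : ℕ) (y : ℝ) :
    bdf c κ c₁ N (n+1) y = c₁ + FF c κ c₁ N n y := by
  unfold bdf FF
  rw [Finset.sum_range_succ']
  simp [Nat.factorial]
  ring

lemma pow_fact_deriv {c κ : ℝ} (hκ : 0 < κ) (k : ℕ) (y : ℝ) :
    HasDerivAt (fun y => Hfun c κ y ^ (k+1) / (k+1).factorial)
      (Hfun c κ y ^ k / k.factorial * (c/2 * Real.exp (κ*y))) y := by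
  have h := ((Hfun_deriv c κ hκ y).pow (k+1)).div_const ((k+1).factorial)
  refine h.congr_deriv ?_
  have hf : ((k+1).factorial : ℝ) = (k+1) * k.factorial := by
    exact_mod_cast Nat.factorial_succ k
  have hk0 : (k.factorial : ℝ) ≠ 0 := by positivity
  rw [hf]
  simp only [Nat.add_sub_cancel]
  field_simp
  push_cast
  ring

lemma FF_deriv {c κ c₁ N : ℝ} (hκ : 0 < κ) (n : ℕ) (y : ℝ) :
    HasDerivAt (FF c κ c₁ N n)
      (bdf c κ c₁ N n y * (c/2 * Real.exp (κ*y))) y := by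
  have hsum : HasDerivAt (fun y => ∑ k ∈ Finset.range n, Hfun c κ y ^ (k+1) / (k+1).factorial)
      (∑ k ∈ Finset.range n, Hfun c κ y ^ k / k.factorial * (c/2 * Real.exp (κ*y))) y := by
    apply HasDerivAt.fun_sum
    intro k _
    exact pow_fact_deriv hκ k y
  have h1 := hsum.const_mul c₁
  have h2 := (pow_fact_deriv (c := c) hκ n y).const_mul N
  have h3 := h1.add h2
  have : FF c κ c₁ N n = fun y => c₁ * (∑ k ∈ Finset.range n, Hfun c κ y ^ (k+1) / (k+1).factorial) + N * (Hfun c κ y ^ (n+1) / (n+1).factorial) := by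
    funext z; unfold FF; ring
  rw [this]
  refine h3.congr_deriv ?_
  rw [← Finset.sum_mul]
  unfold bdf
  ring

section Ind
variable {η A B : ℝ → ℝ → ℝ} {V G χ : ℝ → ℝ} {c κ : ℝ}

lemma ind
    (hA : ∀ b a, HasDerivAt (fun a' => η a' b) (A a b) a)
    (hAb : ∀ a b, HasDerivAt (fun b' => A a b') (-(1/4) * V ((a-b)/2) * η a b) b)
    (hηc : Continuous (uncurry η)) (hAc : Continuous (uncurry A))
    (hVc : Continuous V) (hχc : Continuous χ)
    (hV0 : ∀ x, 0 ≤ V x)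
    (hG : ∀ y, HasDerivAt G (V y) y) (hG0 : ∀ y, 0 ≤ G y)
    (hGle : ∀ y, G y ≤ c * Real.exp (κ*y))
    (hκ : 0 < κ) (hc : 0 ≤ c)
    (hdata : ∀ a, η a (-a) = 0) (hA0 : ∀ a, A a (-a) = χ a / 2)
    (a b N c₁ : ℝ) (hc₁ : 0 ≤ c₁) (hN0 : 0 ≤ N)
    (hN : ∀ α β, -β ≤ α → α ≤ a → β ≤ b → |η α β| ≤ N)
    (hC : ∀ p q : ℝ, p ≤ q → q ≤ a → |∫ y in p..q, χ y / 2| ≤ c₁) :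
    ∀ n : ℕ, ∀ α β, -β ≤ α → α ≤ a → β ≤ b → |η α β| ≤ bdf c κ c₁ N n α := by
  intro n
  induction n with
  | zero =>
    intro α β h1 h2 h3
    have := hN α β h1 h2 h3
    unfold bdf
    simpa using this
  | succ n IH =>
    intro α β h1 h2 h3
    -- continuity of slices
    have hcontA : ∀ b' : ℝ, Continuous (fun α' => A α' b') := fun b' =>
      hAc.comp (continuous_id.prodMk continuous_const)
    have hcontη : ∀ a' : ℝ, Continuous (fun β' => η a' β') := fun a' =>
      hηc.comp (continuous_const.prodMk continuous_id)
    -- master identity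
    have hz : η (-β) β = 0 := by have := hdata (-β); rwa [neg_neg] at this
    have hmaster : η α β = (∫ y in (-β)..α, χ y / 2)
        + ∫ α' in (-β)..α, (A α' β - χ α' / 2) := by
      have hint : ∫ α' in (-β)..α, A α' β = η α β := by
        rw [ftcA hA hAc (-β) α β, hz, sub_zero]
      have hi1 : IntervalIntegrable (fun y => χ y / 2) volume (-β) α :=
        (hχc.div_const 2).intervalIntegrable _ _
      have hi2 : IntervalIntegrable (fun α' => A α' β - χ α' / 2) volume (-β) α :=
        ((hcontA β).sub (hχc.div_const 2)).intervalIntegrable _ _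
      rw [← integral_add hi1 hi2, ← hint]
      congr 1
      funext y
      ring
    -- pointwise bound on the A-term
    have hpt : ∀ α' ∈ Set.Icc (-β) α,
        |A α' β - χ α' / 2| ≤ bdf c κ c₁ N n α' * (c/2 * Real.exp (κ*α')) := by
      intro α' hα'
      obtain ⟨hα'1, hα'2⟩ := hα'
      have hnegα' : -α' ≤ β := by linarith
      have hbd0 := bdf_nonneg hκ hc hc₁ hN0 n α'
      have hinner : A α' β - χ α' / 2
          = ∫ β' in (-α')..β, (-(1/4) * V ((α'-β')/2) * η α' β') := by
        rw [ftcAb hAb hVc hηc α' (-α') β, hA0 α']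
      have hiV : IntervalIntegrable (fun β' => V ((α'-β')/2)) volume (-α') β :=
        (hVc.comp (by fun_prop)).intervalIntegrable _ _
      have hiabs : IntervalIntegrable
          (fun β' => |(-(1/4) * V ((α'-β')/2) * η α' β')|) volume (-α') β := by
        apply Continuous.intervalIntegrable
        exact ((continuous_const.mul (hVc.comp (by fun_prop))).mul (hcontη α')).abs
      have hi2 : IntervalIntegrable
          (fun β' => bdf c κ c₁ N n α' / 4 * V ((α'-β')/2)) volume (-α') β := by
        apply Continuous.intervalIntegrable
        exact continuous_const.mul (hVc.comp (by fun_prop))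
      calc |A α' β - χ α' / 2|
          ≤ ∫ β' in (-α')..β, |(-(1/4) * V ((α'-β')/2) * η α' β')| := by
            rw [hinner]; exact abs_integral_le_integral_abs hnegα'
        _ ≤ ∫ β' in (-α')..β, bdf c κ c₁ N n α' / 4 * V ((α'-β')/2) := by
            apply integral_mono_on hnegα' hiabs hi2
            intro β' hβ'
            obtain ⟨hβ'1, hβ'2⟩ := hβ'
            have hη' := IH α' β' (by linarith) (by linarith) (by linarith)
            have hVnn := hV0 ((α'-β')/2)
            have : |(-(1/4) * V ((α'-β')/2) * η α' β')|
                = 1/4 * V ((α'-β')/2) * |η α' β'| := by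
              rw [abs_mul, abs_mul, abs_neg]
              rw [abs_of_nonneg hVnn]
              norm_num
            rw [this]
            nlinarith [abs_nonneg (η α' β')]
        _ = bdf c κ c₁ N n α' / 4 * ∫ β' in (-α')..β, V ((α'-β')/2) := by
            rw [← intervalIntegral.integral_const_mul]
        _ = bdf c κ c₁ N n α' / 4 * (2*(G ((α' - -α')/2) - G ((α'-β)/2))) := by
            rw [Gint hG hVc]
        _ ≤ bdf c κ c₁ N n α' * (c/2 * Real.exp (κ*α')) := by
            have he : (α' - -α')/2 = α' := by ring
            rw [he]
            have hg1 := hG0 ((α'-β)/2)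
            have hg2 := hGle α'
            nlinarith
    -- assemble
    have hiA : IntervalIntegrable (fun α' => |A α' β - χ α' / 2|) volume (-β) α :=
      (((hcontA β).sub (hχc.div_const 2)).abs).intervalIntegrable _ _
    have hibd : IntervalIntegrable
        (fun α' => bdf c κ c₁ N n α' * (c/2 * Real.exp (κ*α'))) volume (-β) α := by
      apply Continuous.intervalIntegrable
      exact (bdf_cont n).mul (continuous_const.mul (by fun_prop))
    have hFF : ∫ α' in (-β)..α, bdf c κ c₁ N n α' * (c/2 * Real.exp (κ*α'))
        = FF c κ c₁ N n α - FF c κ c₁ N n (-β) := by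
      apply integral_eq_sub_of_hasDerivAt (fun x _ => FF_deriv hκ n x) hibd
    calc |η α β| ≤ |∫ y in (-β)..α, χ y / 2| + |∫ α' in (-β)..α, (A α' β - χ α' / 2)| := by
          rw [hmaster]; exact abs_add_le _ _
      _ ≤ c₁ + ∫ α' in (-β)..α, |A α' β - χ α' / 2| := by
          gcongr
          · exact hC (-β) α h1 h2
          · exact abs_integral_le_integral_abs h1
      _ ≤ c₁ + ∫ α' in (-β)..α, bdf c κ c₁ N n α' * (c/2 * Real.exp (κ*α')) := by
          gcongr
          exact integral_mono_on h1 hiA hibd hpt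
      _ ≤ c₁ + FF c κ c₁ N n α := by
          rw [hFF]
          have := FF_nonneg (c₁ := c₁) (N := N) hκ hc hc₁ hN0 n (-β)
          linarith
      _ = bdf c κ c₁ N (n+1) α := (bdf_succ n α).symm

end Ind

section CoreMain
variable {η A B : ℝ → ℝ → ℝ} {V G χ : ℝ → ℝ} {c κ K c₁ x₁ : ℝ}

/-- A uniform bound on compact backward triangles. -/
lemma triN (hηc : Continuous (uncurry η)) (a b : ℝ) :
    ∃ N : ℝ, 0 ≤ N ∧ ∀ α β, -β ≤ α → α ≤ a → β ≤ b → |η α β| ≤ N := by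
  have hcomp : IsCompact (Set.Icc (-b) a ×ˢ Set.Icc (-a) b) :=
    isCompact_Icc.prod isCompact_Icc
  have hbdd : BddAbove ((fun p : ℝ × ℝ => |η p.1 p.2|) '' (Set.Icc (-b) a ×ˢ Set.Icc (-a) b)) := by
    apply IsCompact.bddAbove_image hcomp
    apply Continuous.continuousOn
    exact (hηc.comp continuous_id).abs
  obtain ⟨N, hNb⟩ := hbdd
  refine ⟨max N 0, le_max_right _ _, ?_⟩
  intro α β h1 h2 h3
  have hmem : (α, β) ∈ Set.Icc (-b) a ×ˢ Set.Icc (-a) b := by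
    constructor
    · exact ⟨by linarith, h2⟩
    · exact ⟨by linarith, h3⟩
  have := hNb (Set.mem_image_of_mem _ hmem)
  exact le_trans this (le_max_left _ _)

lemma corner
    (hA : ∀ b a, HasDerivAt (fun a' => η a' b) (A a b) a)
    (hAb : ∀ a b, HasDerivAt (fun b' => A a b') (-(1/4) * V ((a-b)/2) * η a b) b)
    (hηc : Continuous (uncurry η)) (hAc : Continuous (uncurry A))
    (hVc : Continuous V) (hχc : Continuous χ) (hV0 : ∀ x, 0 ≤ V x)
    (hG : ∀ y, HasDerivAt G (V y) y) (hG0 : ∀ y, 0 ≤ G y)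
    (hGle : ∀ y, G y ≤ c * Real.exp (κ*y)) (hκ : 0 < κ) (hc : 0 ≤ c)
    (hdata : ∀ a, η a (-a) = 0) (hA0 : ∀ a, A a (-a) = χ a / 2)
    (hc₁ : 0 ≤ c₁) (hCa : ∀ p q : ℝ, |∫ y in p..q, χ y / 2| ≤ c₁) :
    ∀ a b, -a ≤ b → |η a b| ≤ c₁ * Real.exp (Hfun c κ a) := by
  intro a b hab
  obtain ⟨N, hN0, hN⟩ := triN hηc a b
  have hn : ∀ n : ℕ, |η a b| ≤ c₁ * Real.exp (Hfun c κ a) + N * Hfun c κ a ^ n / n.factorial := by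
    intro n
    have := ind hA hAb hηc hAc hVc hχc hV0 hG hG0 hGle hκ hc hdata hA0 a b N c₁ hc₁ hN0 hN
      (fun p q _ _ => hCa p q) n a b (by linarith) le_rfl le_rfl
    refine le_trans this ?_
    unfold bdf
    have hH0 := Hfun_nonneg c κ a hκ hc
    have hsum := Real.sum_le_exp_of_nonneg hH0 n
    have : N * Hfun c κ a ^ n / n.factorial = N * (Hfun c κ a ^ n / n.factorial) := by ring
    nlinarith [Real.exp_pos (Hfun c κ a)]
  have htend : Tendsto (fun n : ℕ => c₁ * Real.exp (Hfun c κ a) + N * (Hfun c κ a ^ n / n.factorial))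
      atTop (nhds (c₁ * Real.exp (Hfun c κ a))) := by
    have h1 := (FloorSemiring.tendsto_pow_div_factorial_atTop (Hfun c κ a)).const_mul N
    have h2 := h1.const_add (c₁ * Real.exp (Hfun c κ a))
    simpa using h2
  apply ge_of_tendsto htend
  filter_upwards with n
  have := hn n
  linarith [this, le_of_eq (show N * Hfun c κ a ^ n / n.factorial = N * (Hfun c κ a ^ n / n.factorial) by ring)]

lemma finite_speed
    (hA : ∀ b a, HasDerivAt (fun a' => η a' b) (A a b) a)
    (hAb : ∀ a b, HasDerivAt (fun b' => A a b') (-(1/4) * V ((a-b)/2) * η a b) b)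
    (hηc : Continuous (uncurry η)) (hAc : Continuous (uncurry A))
    (hVc : Continuous V) (hχc : Continuous χ) (hV0 : ∀ x, 0 ≤ V x)
    (hG : ∀ y, HasDerivAt G (V y) y) (hG0 : ∀ y, 0 ≤ G y)
    (hGle : ∀ y, G y ≤ c * Real.exp (κ*y)) (hκ : 0 < κ) (hc : 0 ≤ c)
    (hdata : ∀ a, η a (-a) = 0) (hA0 : ∀ a, A a (-a) = χ a / 2)
    (hχs : ∀ y, y < x₁ → χ y = 0) :
    ∀ a b, -a ≤ b → a < x₁ → η a b = 0 := by
  intro a b hab hax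
  obtain ⟨N, hN0, hN⟩ := triN hηc a b
  have hC : ∀ p q : ℝ, p ≤ q → q ≤ a → |∫ y in p..q, χ y / 2| ≤ 0 := by
    intro p q hpq hqa
    have : ∫ y in p..q, χ y / 2 = ∫ y in p..q, (0:ℝ) := by
      apply integral_congr
      intro y hy
      rw [Set.uIcc_of_le hpq] at hy
      have : χ y = 0 := hχs y (by linarith [hy.2])
      simp [this]
    rw [this]
    simp
  have hn : ∀ n : ℕ, |η a b| ≤ N * (Hfun c κ a ^ n / n.factorial) := by
    intro n
    have := ind hA hAb hηc hAc hVc hχc hV0 hG hG0 hGle hκ hc hdata hA0 a b N 0 le_rfl hN0 hN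
      hC n a b (by linarith) le_rfl le_rfl
    unfold bdf at this
    calc |η a b| ≤ 0 * (∑ k ∈ Finset.range n, Hfun c κ a ^ k / k.factorial)
        + N * Hfun c κ a ^ n / n.factorial := this
      _ = N * (Hfun c κ a ^ n / n.factorial) := by ring
  have htend : Tendsto (fun n : ℕ => N * (Hfun c κ a ^ n / n.factorial)) atTop (nhds 0) := by
    have h1 := (FloorSemiring.tendsto_pow_div_factorial_atTop (Hfun c κ a)).const_mul N
    simpa using h1
  have : |η a b| ≤ 0 := ge_of_tendsto htend (by filter_upwards with n using hn n)
  have := abs_nonneg (η a b)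
  have : |η a b| = 0 := le_antisymm ‹|η a b| ≤ 0› ‹0 ≤ |η a b|›
  exact abs_eq_zero.mp this

end CoreMain

section CoreMain2
variable {η A B : ℝ → ℝ → ℝ} {V G χ : ℝ → ℝ} {c κ K c₁ x₁ : ℝ}

lemma Blimit
    (hBa : ∀ b a, HasDerivAt (fun a' => B a' b) (-(1/4) * V ((a-b)/2) * η a b) a)
    (hηc : Continuous (uncurry η)) (hVc : Continuous V) (hV0 : ∀ x, 0 ≤ V x)
    (hG : ∀ y, HasDerivAt G (V y) y) (hG0 : ∀ y, 0 ≤ G y)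
    (hGle : ∀ y, G y ≤ c * Real.exp (κ*y)) (hκ : 0 < κ) (hc : 0 ≤ c)
    (hB0 : ∀ a, B a (-a) = χ a / 2)
    (hχs : ∀ y, y < x₁ → χ y = 0)
    (hcorner : ∀ a b, -a ≤ b → |η a b| ≤ c₁ * Real.exp (Hfun c κ a)) (hc₁ : 0 ≤ c₁)
    (a : ℝ) :
    Tendsto (fun b => B a b) atTop (nhds 0) := by
  set CB := c₁ * Real.exp (Hfun c κ a) with hCB
  have hCB0 : 0 ≤ CB := by positivity
  have hbound : ∀ b : ℝ, -a ≤ b → -x₁ < b →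
      |B a b| ≤ CB / 2 * (c * Real.exp (κ*((a-b)/2))) := by
    intro b h1 h2
    have hid : B a b - B (-b) b = ∫ α in (-b)..a, (-(1/4) * V ((α-b)/2) * η α b) := by
      rw [ftcB hBa hVc hηc b (-b) a]
    have hB0' : B (-b) b = χ (-b) / 2 := by
      have := hB0 (-b); rwa [neg_neg] at this
    have hχ0 : χ (-b) = 0 := hχs (-b) (by linarith)
    have hiabs : IntervalIntegrable (fun α => |(-(1/4) * V ((α-b)/2) * η α b)|) volume (-b) a := by
      apply Continuous.intervalIntegrable
      exact ((continuous_const.mul (hVc.comp (by fun_prop))).mul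
        (hηc.comp (continuous_id.prodMk continuous_const))).abs
    have hi2 : IntervalIntegrable (fun α => CB / 4 * V ((α-b)/2)) volume (-b) a := by
      apply Continuous.intervalIntegrable
      exact continuous_const.mul (hVc.comp (by fun_prop))
    have hBb : B a b = ∫ α in (-b)..a, (-(1/4) * V ((α-b)/2) * η α b) := by
      rw [← hid, hB0', hχ0]; ring
    calc |B a b| ≤ ∫ α in (-b)..a, |(-(1/4) * V ((α-b)/2) * η α b)| := by
          rw [hBb]; exact abs_integral_le_integral_abs (by linarith)
      _ ≤ ∫ α in (-b)..a, CB / 4 * V ((α-b)/2) := by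
          apply integral_mono_on (by linarith) hiabs hi2
          intro α hα
          have hVnn := hV0 ((α-b)/2)
          have hηb : |η α b| ≤ CB := by
            have := hcorner α b (by linarith [hα.1])
            refine le_trans this ?_
            rw [hCB]
            have : Hfun c κ α ≤ Hfun c κ a := Hfun_mono c κ hκ hc hα.2
            have := Real.exp_le_exp.2 this
            nlinarith
          have habs : |(-(1/4) * V ((α-b)/2) * η α b)| = 1/4 * V ((α-b)/2) * |η α b| := by
            rw [abs_mul, abs_mul, abs_neg, abs_of_nonneg hVnn]; norm_num
          rw [habs]
          nlinarith [abs_nonneg (η α b)]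
      _ = CB / 4 * ∫ α in (-b)..a, V ((α-b)/2) := by rw [← intervalIntegral.integral_const_mul]
      _ = CB / 4 * (2*(G ((a-b)/2) - G ((-b-b)/2))) := by rw [Gint2 hG hVc]
      _ ≤ CB / 2 * (c * Real.exp (κ*((a-b)/2))) := by
          have hg1 := hG0 ((-b-b)/2)
          have hg2 := hGle ((a-b)/2)
          nlinarith
  have htend : Tendsto (fun b => CB / 2 * (c * Real.exp (κ*((a-b)/2)))) atTop (nhds 0) := by
    have h1 : Tendsto (fun b : ℝ => κ*((a-b)/2)) atTop atBot := by
      have h2 : Tendsto (fun b : ℝ => a - b) atTop atBot :=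
        tendsto_atBot_add_const_left _ a tendsto_neg_atTop_atBot
      have h3 := (h2.atBot_mul_const (by linarith : (0:ℝ) < κ/2))
      apply h3.congr'
      filter_upwards with x
      ring
    have h4 := (Real.tendsto_exp_atBot.comp h1).const_mul c
    have h5 := h4.const_mul (CB/2)
    simpa using h5
  apply squeeze_zero_norm' _ htend
  filter_upwards [eventually_ge_atTop (-a), eventually_gt_atTop (-x₁)] with b hb1 hb2
  simpa using hbound b hb1 hb2

end CoreMain2

section CoreMain3
variable {η A B : ℝ → ℝ → ℝ} {V G χ : ℝ → ℝ} {c κ K c₁ x₁ : ℝ}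

lemma strip_step
    (hA : ∀ b a, HasDerivAt (fun a' => η a' b) (A a b) a)
    (hAb : ∀ a b, HasDerivAt (fun b' => A a b') (-(1/4) * V ((a-b)/2) * η a b) b)
    (hηc : Continuous (uncurry η)) (hAc : Continuous (uncurry A))
    (hVc : Continuous V) (hV0 : ∀ x, 0 ≤ V x)
    (hG : ∀ y, HasDerivAt G (V y) y) (hG0 : ∀ y, 0 ≤ G y) (hGK : ∀ y, G y ≤ K)
    (hdata : ∀ a, η a (-a) = 0)
    (hcorner : ∀ a b, -a ≤ b → |η a b| ≤ c₁ * Real.exp (Hfun c κ a)) (hc₁ : 0 ≤ c₁)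
    (hκ : 0 < κ) (hc : 0 ≤ c)
    (hAlim : ∀ a, Tendsto (fun b => A a b) atTop (nhds 0))
    (s : ℝ) (hs : ∀ α β, -α ≤ β → α ≤ s → η α β = 0) :
    ∀ a b, -a ≤ b → a ≤ s + 1/(K+1) → η a b = 0 := by
  have hK0 : 0 ≤ K := le_trans (hG0 0) (hGK 0)
  set δ : ℝ := 1/(K+1) with hδdef
  have hδ0 : 0 < δ := by rw [hδdef]; positivity
  -- the supremum over the extended strip
  set Γ : Set (ℝ × ℝ) := {p : ℝ × ℝ | -p.1 ≤ p.2 ∧ p.1 ≤ s + δ} with hΓdef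
  set S : Set ℝ := (fun p : ℝ × ℝ => |η p.1 p.2|) '' Γ with hSdef
  have hSne : S.Nonempty := ⟨|η s (-s)|, ⟨(s, -s), ⟨le_refl _, by linarith⟩, rfl⟩⟩
  have hSbdd : BddAbove S := by
    refine ⟨c₁ * Real.exp (Hfun c κ (s + δ)), ?_⟩
    rintro x ⟨p, hp, rfl⟩
    refine le_trans (hcorner p.1 p.2 hp.1) ?_
    have h1 : Hfun c κ p.1 ≤ Hfun c κ (s + δ) := Hfun_mono c κ hκ hc hp.2
    have h2 := Real.exp_le_exp.2 h1
    nlinarith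
  set μ : ℝ := sSup S with hμdef
  have hμmem : ∀ α β, -α ≤ β → α ≤ s + δ → |η α β| ≤ μ := by
    intro α β h1 h2
    exact le_csSup hSbdd ⟨(α, β), ⟨h1, h2⟩, rfl⟩
  have hμ0 : 0 ≤ μ := le_trans (abs_nonneg _) (hμmem s (-s) le_rfl (by linarith))
  -- A vanishes on the old region
  have hA0' : ∀ α b', -α ≤ b' → α ≤ s → A α b' = 0 := by
    intro α b' h1 h2
    have hconst : ∀ᶠ b'' in atTop, A α b'' = A α b' := by
      filter_upwards [eventually_ge_atTop b'] with b'' hb''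
      have hid : ∫ β in b'..b'', (-(1/4) * V ((α-β)/2) * η α β) = A α b'' - A α b' :=
        ftcAb hAb hVc hηc α b' b''
      have hzero : ∫ β in b'..b'', (-(1/4) * V ((α-β)/2) * η α β) = 0 := by
        rw [show (0:ℝ) = ∫ β in b'..b'', (0:ℝ) by simp]
        apply integral_congr
        intro β hβ
        rw [Set.uIcc_of_le hb''] at hβ
        have : η α β = 0 := hs α β (by linarith [hβ.1]) h2
        simp [this]
      have := hid.symm.trans hzero
      linarith [this]
    have h3 : Tendsto (fun b'' => A α b'') atTop (nhds (A α b')) := by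
      apply Tendsto.congr' (hconst.mono fun x hx => hx.symm) tendsto_const_nhds
    exact tendsto_nhds_unique h3 (hAlim α)
  -- A is small on the strip
  have hAsmall : ∀ α b', -α ≤ b' → α ≤ s + δ → |A α b'| ≤ 1/2 * μ * K := by
    intro α b' h1 h2
    have hstep : ∀ b'' : ℝ, b' ≤ b'' → |A α b'| ≤ |A α b''| + 1/2 * μ * K := by
      intro b'' hb''
      have hid : ∫ β in b'..b'', (-(1/4) * V ((α-β)/2) * η α β) = A α b'' - A α b' :=
        ftcAb hAb hVc hηc α b' b''
      have hiabs : IntervalIntegrable (fun β => |(-(1/4) * V ((α-β)/2) * η α β)|) volume b' b'' := by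
        apply Continuous.intervalIntegrable
        exact ((continuous_const.mul (hVc.comp (by fun_prop))).mul
          (hηc.comp (continuous_const.prodMk continuous_id))).abs
      have hi2 : IntervalIntegrable (fun β => μ / 4 * V ((α-β)/2)) volume b' b'' := by
        apply Continuous.intervalIntegrable
        exact continuous_const.mul (hVc.comp (by fun_prop))
      have hintle : |∫ β in b'..b'', (-(1/4) * V ((α-β)/2) * η α β)| ≤ 1/2 * μ * K := by
        calc |∫ β in b'..b'', (-(1/4) * V ((α-β)/2) * η α β)|
            ≤ ∫ β in b'..b'', |(-(1/4) * V ((α-β)/2) * η α β)| :=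
              abs_integral_le_integral_abs hb''
          _ ≤ ∫ β in b'..b'', μ / 4 * V ((α-β)/2) := by
              apply integral_mono_on hb'' hiabs hi2
              intro β hβ
              have hVnn := hV0 ((α-β)/2)
              have hηb : |η α β| ≤ μ := hμmem α β (by linarith [hβ.1]) h2
              have habs : |(-(1/4) * V ((α-β)/2) * η α β)| = 1/4 * V ((α-β)/2) * |η α β| := by
                rw [abs_mul, abs_mul, abs_neg, abs_of_nonneg hVnn]; norm_num
              rw [habs]
              nlinarith [abs_nonneg (η α β)]
          _ = μ / 4 * ∫ β in b'..b'', V ((α-β)/2) := by rw [← intervalIntegral.integral_const_mul]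
          _ = μ / 4 * (2*(G ((α-b')/2) - G ((α-b'')/2))) := by rw [Gint hG hVc]
          _ ≤ 1/2 * μ * K := by
              have hg1 := hG0 ((α-b'')/2)
              have hg2 := hGK ((α-b')/2)
              have hg3 := hG0 ((α-b')/2)
              nlinarith
      calc |A α b'| = |A α b'' + (A α b' - A α b'')| := by congr 1; ring
        _ ≤ |A α b''| + |A α b' - A α b''| := abs_add_le _ _
        _ = |A α b''| + |A α b'' - A α b'| := by rw [abs_sub_comm]
        _ ≤ |A α b''| + 1/2 * μ * K := by
            rw [← hid]
            linarith [hintle]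
    have htend : Tendsto (fun b'' => |A α b''| + 1/2 * μ * K) atTop (nhds (1/2 * μ * K)) := by
      have h1 := ((hAlim α).abs).add_const (1/2 * μ * K)
      simpa using h1
    apply ge_of_tendsto htend
    filter_upwards [eventually_ge_atTop b'] with b'' hb'' using hstep b'' hb''
  -- pointwise contraction estimate
  have hpt : ∀ a b, -a ≤ b → a ≤ s + δ → |η a b| ≤ 1/2 * μ * K * δ := by
    intro a b hab ha
    have hKμδ : 0 ≤ 1/2 * μ * K * δ := by positivity
    rcases le_or_gt a s with hcase | hcase
    · rw [hs a b hab hcase]; simpa using hKμδ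
    · have hz : η (-b) b = 0 := by have := hdata (-b); rwa [neg_neg] at this
      have hηint : η a b = ∫ α in (-b)..a, A α b := by
        rw [ftcA hA hAc (-b) a b, hz, sub_zero]
      have hcA : Continuous (fun α => A α b) :=
        hAc.comp (continuous_id.prodMk continuous_const)
      rcases le_or_gt (-b) s with hbc | hbc
      · have hi1 : IntervalIntegrable (fun α => A α b) volume (-b) s :=
          hcA.intervalIntegrable _ _
        have hi2 : IntervalIntegrable (fun α => A α b) volume s a :=
          hcA.intervalIntegrable _ _
        have hsplit : ∫ α in (-b)..a, A α b
            = (∫ α in (-b)..s, A α b) + ∫ α in s..a, A α b :=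
          (integral_add_adjacent_intervals hi1 hi2).symm
        have hfirst : ∫ α in (-b)..s, A α b = 0 := by
          rw [show (0:ℝ) = ∫ α in (-b)..s, (0:ℝ) by simp]
          apply integral_congr
          intro α hα
          rw [Set.uIcc_of_le hbc] at hα
          exact hA0' α b (by linarith [hα.1]) hα.2
        have hsecond : |∫ α in s..a, A α b| ≤ (a - s) * (1/2 * μ * K) := by
          calc |∫ α in s..a, A α b| ≤ ∫ α in s..a, |A α b| :=
                abs_integral_le_integral_abs (le_of_lt hcase)
            _ ≤ ∫ α in s..a, (1/2 * μ * K) := by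
                apply integral_mono_on (le_of_lt hcase)
                  (hcA.abs.intervalIntegrable _ _)
                  (intervalIntegrable_const)
                intro α hα
                exact hAsmall α b (by linarith [hα.1]) (by linarith [hα.2])
            _ = (a - s) * (1/2 * μ * K) := by rw [intervalIntegral.integral_const]; simp [smul_eq_mul]
        rw [hηint, hsplit, hfirst, zero_add]
        refine le_trans hsecond ?_
        have : a - s ≤ δ := by linarith
        nlinarith [mul_nonneg (mul_nonneg (by norm_num : (0:ℝ) ≤ 1/2) hμ0) hK0]
      · have hab' : -b ≤ a := by linarith
        have hmain : |∫ α in (-b)..a, A α b| ≤ (a - (-b)) * (1/2 * μ * K) := by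
          calc |∫ α in (-b)..a, A α b| ≤ ∫ α in (-b)..a, |A α b| :=

                abs_integral_le_integral_abs hab'
            _ ≤ ∫ α in (-b)..a, (1/2 * μ * K) := by
                apply integral_mono_on hab' (hcA.abs.intervalIntegrable _ _)
                  (intervalIntegrable_const)
                intro α hα
                exact hAsmall α b (by linarith [hα.1]) (by linarith [hα.2])
            _ = (a - (-b)) * (1/2 * μ * K) := by rw [intervalIntegral.integral_const]; simp [smul_eq_mul]
        rw [hηint]
        refine le_trans hmain ?_
        have : a - (-b) ≤ δ := by linarith
        nlinarith [mul_nonneg (mul_nonneg (by norm_num : (0:ℝ) ≤ 1/2) hμ0) hK0]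
  -- contraction closes
  have hμle : μ ≤ 1/2 * μ * K * δ := by
    apply csSup_le hSne
    rintro x ⟨p, hp, rfl⟩
    exact hpt p.1 p.2 hp.1 hp.2
  have hδK : δ * (K+1) = 1 := by rw [hδdef]; field_simp
  have hμzero : μ ≤ 0 := by nlinarith
  intro a b hab ha
  have := hμmem a b hab ha
  have habs0 : |η a b| ≤ 0 := le_trans this hμzero
  exact abs_eq_zero.mp (le_antisymm habs0 (abs_nonneg _))

end CoreMain3

section Conclude
variable {η A B : ℝ → ℝ → ℝ} {V G χ : ℝ → ℝ} {c κ K c₁ x₁ : ℝ}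

theorem wave1d_core
    (hA : ∀ b a, HasDerivAt (fun a' => η a' b) (A a b) a)
    (hAb : ∀ a b, HasDerivAt (fun b' => A a b') (-(1/4) * V ((a-b)/2) * η a b) b)
    (hBa : ∀ b a, HasDerivAt (fun a' => B a' b) (-(1/4) * V ((a-b)/2) * η a b) a)
    (hηc : Continuous (uncurry η)) (hAc : Continuous (uncurry A))
    (hVc : Continuous V) (hχc : Continuous χ) (hV0 : ∀ x, 0 ≤ V x)
    (hG : ∀ y, HasDerivAt G (V y) y) (hG0 : ∀ y, 0 ≤ G y) (hGK : ∀ y, G y ≤ K)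
    (hGle : ∀ y, G y ≤ c * Real.exp (κ*y)) (hκ : 0 < κ) (hc : 0 ≤ c)
    (hdata : ∀ a, η a (-a) = 0)
    (hA0 : ∀ a, A a (-a) = χ a / 2) (hB0 : ∀ a, B a (-a) = χ a / 2)
    (hχs : ∀ y, y < x₁ → χ y = 0)
    (hc₁ : 0 ≤ c₁) (hCa : ∀ p q : ℝ, |∫ y in p..q, χ y / 2| ≤ c₁)
    (hrad : ∀ a, Tendsto (fun b => A a b + B a b) atTop (nhds 0)) :
    ∀ a b, -a ≤ b → η a b = 0 := by
  have hcorner := corner hA hAb hηc hAc hVc hχc hV0 hG hG0 hGle hκ hc hdata hA0 hc₁ hCa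
  have hBlim := fun a => Blimit hBa hηc hVc hV0 hG hG0 hGle hκ hc hB0 hχs hcorner hc₁ a
  have hAlim : ∀ a, Tendsto (fun b => A a b) atTop (nhds 0) := by
    intro a
    have := (hrad a).sub (hBlim a)
    simpa using this
  have hK0 : 0 ≤ K := le_trans (hG0 0) (hGK 0)
  have main : ∀ n : ℕ, ∀ a b, -a ≤ b → a ≤ (x₁ - 1) + n * (1/(K+1)) → η a b = 0 := by
    intro n
    induction n with
    | zero =>
      intro a b hab ha
      apply finite_speed hA hAb hηc hAc hVc hχc hV0 hG hG0 hGle hκ hc hdata hA0 hχs a b hab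
      simp only [Nat.cast_zero, zero_mul, add_zero] at ha
      linarith
    | succ n IH =>
      intro a b hab ha
      apply strip_step hA hAb hηc hAc hVc hV0 hG hG0 hGK hdata hcorner hc₁ hκ hc hAlim
        ((x₁ - 1) + n * (1/(K+1))) (fun α β h1 h2 => IH α β h1 h2) a b hab
      push_cast at ha
      linarith
  intro a b hab
  have hδ0 : 0 < 1/(K+1) := by positivity
  obtain ⟨n, hn⟩ := exists_nat_ge ((a - (x₁ - 1)) / (1/(K+1)))
  apply main n a b hab
  have := (div_le_iff₀ hδ0).mp hn
  linarith

end Conclude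


noncomputable def rstar' (M r : ℝ) : ℝ := rstar M r

section Rho
variable {M : ℝ} (hM : 0 < M)

lemma rstar_hasDeriv {r : ℝ} (hr : 2*M < r) :
    HasDerivAt (rstar' M) (r/(r-2*M)) r := by
  have h1 : HasDerivAt (fun s : ℝ => s - 2*M) 1 r := (hasDerivAt_id r).sub_const _
  have h2 : HasDerivAt (fun s : ℝ => Real.log (s - 2*M)) (1/(r-2*M)) r := by
    have := (Real.hasDerivAt_log (by linarith : r - 2*M ≠ 0)).comp r h1
    exact this.congr_deriv (by ring)
  have h3 := ((hasDerivAt_id r).add (h2.const_mul (2*M)))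
  have : rstar' M = fun s => s + 2*M * Real.log (s - 2*M) := rfl
  rw [this]
  refine h3.congr_deriv ?_
  have hne : r - 2*M ≠ 0 := by linarith
  field_simp
  ring

include hM in
lemma rstar_strictMonoOn : StrictMonoOn (rstar' M) (Set.Ioi (2*M)) := by
  apply strictMonoOn_of_deriv_pos (convex_Ioi _)
  · apply ContinuousOn.add continuousOn_id
    apply ContinuousOn.mul continuousOn_const
    apply ContinuousOn.log (by fun_prop)
    intro x hx
    simp only [Set.mem_Ioi] at hx
    linarith
  · intro x hx
    rw [interior_Ioi] at hx
    simp only [Set.mem_Ioi] at hx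
    rw [(rstar_hasDeriv hx).deriv]
    have h1 : 0 < x - 2*M := by linarith
    have h2 : 0 < x := by linarith
    positivity

include hM in
lemma rstar_surj (x : ℝ) : ∃ r, 2*M < r ∧ rstar' M r = x := by
  set b : ℝ := max (2*M+1) x with hb
  have hb1 : 2*M + 1 ≤ b := le_max_left _ _
  have hbgt : 2*M < b := by linarith
  have hrb : x ≤ rstar' M b := by
    have hlog : 0 ≤ Real.log (b - 2*M) := Real.log_nonneg (by linarith)
    have : x ≤ b := le_max_right _ _
    unfold rstar' rstar
    nlinarith
  set ε : ℝ := min (1/2) (min ((b - 2*M)/2) (Real.exp ((x - b)/(2*M)))) with hε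
  have hε0 : 0 < ε := by
    apply lt_min (by norm_num)
    exact lt_min (by linarith) (Real.exp_pos _)
  set a : ℝ := 2*M + ε with ha
  have hagt : 2*M < a := by linarith
  have hab : a ≤ b := by
    have : ε ≤ (b - 2*M)/2 := le_trans (min_le_right _ _) (min_le_left _ _)
    linarith
  have hra : rstar' M a ≤ x := by
    have h1 : ε ≤ Real.exp ((x - b)/(2*M)) := le_trans (min_le_right _ _) (min_le_right _ _)
    have h2 : Real.log ε ≤ (x - b)/(2*M) := by
      calc Real.log ε ≤ Real.log (Real.exp ((x-b)/(2*M))) := Real.log_le_log hε0 h1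
        _ = (x-b)/(2*M) := Real.log_exp _
    have h3 : 2*M * Real.log ε ≤ x - b := by
      have := mul_le_mul_of_nonneg_left h2 (by linarith : (0:ℝ) ≤ 2*M)
      calc 2*M * Real.log ε ≤ 2*M * ((x-b)/(2*M)) := this
        _ = x - b := by field_simp
    unfold rstar' rstar
    have : a - 2*M = ε := by rw [ha]; ring
    rw [this]
    linarith
  have hcont : ContinuousOn (rstar' M) (Set.Icc a b) := by
    apply ContinuousOn.add continuousOn_id
    apply ContinuousOn.mul continuousOn_const
    apply ContinuousOn.log (by fun_prop)
    intro y hy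
    have := hy.1
    intro hzero
    nlinarith [hy.1]
  have := intermediate_value_Icc hab hcont
  have hx : x ∈ Set.Icc (rstar' M a) (rstar' M b) := ⟨hra, hrb⟩
  obtain ⟨r, hr, hrx⟩ := this hx
  exact ⟨r, by linarith [hr.1], hrx⟩

end Rho

open Classical in
noncomputable def rho (M x : ℝ) : ℝ :=
  if h : ∃ r, 2*M < r ∧ rstar' M r = x then h.choose else 0

section RhoProps
variable {M : ℝ} (hM : 0 < M)

include hM

lemma rho_spec (x : ℝ) : 2*M < rho M x ∧ rstar' M (rho M x) = x := by
  have h := rstar_surj hM x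
  rw [rho]
  rw [dif_pos h]
  exact h.choose_spec

lemma rho_gt (x : ℝ) : 2*M < rho M x := (rho_spec hM x).1

lemma rho_rstar (x : ℝ) : rstar' M (rho M x) = x := (rho_spec hM x).2

lemma rstar_rho {r : ℝ} (hr : 2*M < r) : rho M (rstar' M r) = r := by
  have h1 := rho_gt hM (rstar' M r)
  have h2 := rho_rstar hM (rstar' M r)
  exact (rstar_strictMonoOn hM).injOn h1 hr h2

lemma rho_lt_iff {x u : ℝ} (hu : 2*M < u) : rho M x < u ↔ x < rstar' M u := by
  constructor
  · intro h
    have := (rstar_strictMonoOn hM) (rho_gt hM x) hu h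
    rwa [rho_rstar hM] at this
  · intro h
    by_contra hc
    push_neg at hc
    rcases eq_or_lt_of_le hc with heq | hlt
    · rw [heq, rho_rstar hM] at h
      exact lt_irrefl _ h
    · have := (rstar_strictMonoOn hM) hu (rho_gt hM x) hlt
      rw [rho_rstar hM] at this
      linarith

lemma lt_rho_iff {x l : ℝ} (hl : 2*M < l) : l < rho M x ↔ rstar' M l < x := by
  constructor
  · intro h
    have := (rstar_strictMonoOn hM) hl (rho_gt hM x) h
    rwa [rho_rstar hM] at this
  · intro h
    by_contra hc
    push_neg at hc
    rcases eq_or_lt_of_le hc with heq | hlt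
    · rw [← heq, rho_rstar hM] at h
      exact lt_irrefl _ h
    · have := (rstar_strictMonoOn hM) (rho_gt hM x) hl hlt
      rw [rho_rstar hM] at this
      linarith

lemma rho_continuousAt (x : ℝ) : ContinuousAt (rho M) x := by
  rw [ContinuousAt]
  rw [tendsto_order]
  constructor
  · intro l hl
    rcases le_or_gt l (2*M) with h2 | h2
    · filter_upwards with y
      exact lt_of_le_of_lt h2 (rho_gt hM y)
    · have hx : rstar' M l < x := (lt_rho_iff hM h2).mp hl
      filter_upwards [Ioi_mem_nhds hx] with y hy
      exact (lt_rho_iff hM h2).mpr hy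
  · intro u hu
    have h2 : 2*M < u := lt_trans (rho_gt hM x) hu
    have hx : x < rstar' M u := (rho_lt_iff hM h2).mp hu
    filter_upwards [Iio_mem_nhds hx] with y hy
    exact (rho_lt_iff hM h2).mpr hy

lemma rho_hasDeriv (x : ℝ) :
    HasDerivAt (rho M) ((rho M x - 2*M)/(rho M x)) x := by
  have h := HasDerivAt.of_local_left_inverse (rho_continuousAt hM x)
    (rstar_hasDeriv (rho_gt hM x)) ?_ ?_
  · refine h.congr_deriv ?_
    rw [inv_div]
  · have h1 : 0 < rho M x - 2*M := by linarith [rho_gt hM x]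
    have h2 : 0 < rho M x := by linarith [rho_gt hM x, hM]
    positivity
  · filter_upwards with y
    exact rho_rstar hM y

lemma rho_tendsto_atBot :
    Tendsto (rho M) atBot (nhdsWithin (2*M) (Set.Ioi (2*M))) := by
  rw [tendsto_nhdsWithin_iff]
  constructor
  · rw [tendsto_order]
    constructor
    · intro l hl
      filter_upwards with y using lt_of_lt_of_le hl (le_of_lt (rho_gt hM y))
    · intro u hu
      set u' := (2*M + u)/2 with hu'
      have h1 : 2*M < u' := by rw [hu']; linarith
      have h2 : u' < u := by rw [hu']; linarith
      filter_upwards [eventually_lt_atBot (rstar' M u')] with y hy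
      exact lt_trans ((rho_lt_iff hM h1).mpr hy) h2
  · filter_upwards with y using rho_gt hM y

end RhoProps

section RhoSmooth
variable {M : ℝ} (hM : 0 < M)

include hM in
lemma rho_contDiff : ∀ n : ℕ, ContDiff ℝ (n : WithTop ℕ∞) (rho M) := by
  intro n
  induction n with
  | zero =>
    rw [show ((0:ℕ) : WithTop ℕ∞) = 0 by rfl, contDiff_zero]
    exact continuous_iff_continuousAt.mpr (fun x => rho_continuousAt hM x)
  | succ n IH =>
    have hcast : ((n+1 : ℕ) : WithTop ℕ∞) = (n : WithTop ℕ∞) + 1 := by push_cast; rfl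
    rw [hcast, contDiff_succ_iff_deriv]
    refine ⟨fun x => (rho_hasDeriv hM x).differentiableAt, ?_, ?_⟩
    · intro h
      exact absurd h (by exact_mod_cast (WithTop.natCast_ne_top n))
    · have hd : deriv (rho M) = fun x => (rho M x - 2*M)/(rho M x) :=
        funext fun x => (rho_hasDeriv hM x).deriv
      rw [hd]
      exact (IH.sub contDiff_const).div IH
        (fun x => by have := rho_gt hM x; intro h; rw [h] at this; linarith)

end RhoSmooth

/-- clipping bound for integrals of a function supported in `[x₁, x₂]`. -/
lemma chi_clip {χ : ℝ → ℝ} {x₁ x₂ : ℝ} (hχc : Continuous χ) (h12 : x₁ ≤ x₂)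
    (hzero : ∀ y, y < x₁ ∨ x₂ < y → χ y = 0) :
    ∀ p q : ℝ, |∫ y in p..q, χ y / 2| ≤ (∫ y in (x₁-1)..(x₂+1), |χ y|) / 2 := by
  have hint : ∀ a b : ℝ, IntervalIntegrable (fun y => |χ y| / 2) MeasureTheory.volume a b :=
    fun a b => ((hχc.abs.div_const 2)).intervalIntegrable a b
  have key : ∀ p q : ℝ, p ≤ q → |∫ y in p..q, χ y / 2| ≤ (∫ y in (x₁-1)..(x₂+1), |χ y|) / 2 := by
    intro p q hpq
    set p' : ℝ := min p (x₁ - 1) with hp'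
    set q' : ℝ := max q (x₂ + 1) with hq'
    have hp'le : p' ≤ p := min_le_left _ _
    have hq'ge : q ≤ q' := le_max_left _ _
    have hp'x : p' ≤ x₁ - 1 := min_le_right _ _
    have hq'x : x₂ + 1 ≤ q' := le_max_right _ _
    have h1 : |∫ y in p..q, χ y / 2| ≤ ∫ y in p..q, |χ y| / 2 := by
      have := intervalIntegral.abs_integral_le_integral_abs
        (f := fun y => χ y / 2) (μ := MeasureTheory.volume) hpq
      convert this using 2
      ext y
      rw [abs_div]
      norm_num
    have h2 : (∫ y in p..q, |χ y| / 2) ≤ ∫ y in p'..q', |χ y| / 2 := by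
      rw [← intervalIntegral.integral_add_adjacent_intervals
          (show IntervalIntegrable _ MeasureTheory.volume p' q from
            (hint p' p).trans (hint p q)) (hint q q'),
        ← intervalIntegral.integral_add_adjacent_intervals (hint p' p) (hint p q)]
      have hnn1 : 0 ≤ ∫ y in p'..p, |χ y| / 2 :=
        intervalIntegral.integral_nonneg hp'le (fun y _ => by positivity)
      have hnn2 : 0 ≤ ∫ y in q..q', |χ y| / 2 :=
        intervalIntegral.integral_nonneg hq'ge (fun y _ => by positivity)
      linarith
    have h3 : (∫ y in p'..q', |χ y| / 2) = ∫ y in (x₁-1)..(x₂+1), |χ y| / 2 := by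
      rw [← intervalIntegral.integral_add_adjacent_intervals (hint p' (x₁-1))
        (show IntervalIntegrable _ MeasureTheory.volume (x₁-1) q' from
          ((hint (x₁-1) (x₂+1)).trans (hint (x₂+1) q'))),
        ← intervalIntegral.integral_add_adjacent_intervals (hint (x₁-1) (x₂+1)) (hint (x₂+1) q')]
      have hz1 : ∫ y in p'..(x₁-1), |χ y| / 2 = 0 := by
        rw [show (0:ℝ) = ∫ y in p'..(x₁-1), (0:ℝ) by simp]
        apply intervalIntegral.integral_congr
        intro y hy
        rw [Set.uIcc_of_le hp'x] at hy
        simp only []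
        rw [hzero y (Or.inl (by linarith [hy.2]))]
        simp
      have hz2 : ∫ y in (x₂+1)..q', |χ y| / 2 = 0 := by
        rw [show (0:ℝ) = ∫ y in (x₂+1)..q', (0:ℝ) by simp]
        apply intervalIntegral.integral_congr
        intro y hy
        rw [Set.uIcc_of_le hq'x] at hy
        simp only []
        rw [hzero y (Or.inr (by linarith [hy.1]))]
        simp
      rw [hz1, hz2]
      ring
    have h4 : (∫ y in (x₁-1)..(x₂+1), |χ y| / 2) = (∫ y in (x₁-1)..(x₂+1), |χ y|) / 2 := by
      rw [intervalIntegral.integral_div]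
    linarith
  intro p q
  rcases le_or_gt p q with h | h
  · exact key p q h
  · rw [intervalIntegral.integral_symm, abs_neg]
    exact key q p (le_of_lt h)

noncomputable def gfun (M : ℝ) (u : ℝ → ℝ → ℝ) : ℝ × ℝ → ℝ :=
  fun p => rho M p.2 * u p.1 (rho M p.2)
noncomputable def g1 (M : ℝ) (u : ℝ → ℝ → ℝ) : ℝ × ℝ → ℝ :=
  fun p => fderiv ℝ (gfun M u) p (1, 0)
noncomputable def g2 (M : ℝ) (u : ℝ → ℝ → ℝ) : ℝ × ℝ → ℝ :=
  fun p => fderiv ℝ (gfun M u) p (0, 1)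
noncomputable def rhop (M x : ℝ) : ℝ := (rho M x - 2*M)/(rho M x)

section Plumb
variable {M : ℝ} {u : ℝ → ℝ → ℝ}
  (hM : 0 < M)
  (huC : ContDiffOn ℝ ((⊤:ℕ∞) : WithTop ℕ∞) (Function.uncurry u)
    ((Set.univ : Set ℝ) ×ˢ Set.Ioi (2*M)))

include hM huC

lemma uCAt (n : ℕ) {p : ℝ × ℝ} (hp : 2*M < p.2) :
    ContDiffAt ℝ (n : WithTop ℕ∞) (Function.uncurry u) p := by
  have hmem : ((Set.univ : Set ℝ) ×ˢ Set.Ioi (2*M)) ∈ nhds p :=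
    (isOpen_univ.prod isOpen_Ioi).mem_nhds ⟨trivial, hp⟩
  exact (huC.contDiffAt hmem).of_le (by exact_mod_cast le_top)

lemma u_slice_t {t r : ℝ} (hr : 2*M < r) :
    HasDerivAt (fun s => u s r) (pdt u t r) t := by
  have hD := (uCAt hM huC 1 (p := (t,r)) hr).differentiableAt (by norm_num)
  have hline : HasDerivAt (fun s : ℝ => (s, r)) ((1:ℝ), (0:ℝ)) t :=
    (hasDerivAt_id t).prodMk (hasDerivAt_const t r)
  have hd := hD.hasFDerivAt.comp_hasDerivAt t hline
  have hd' : HasDerivAt (fun s => u s r) (fderiv ℝ (Function.uncurry u) (t,r) (1,0)) t := hd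
  rw [show pdt u t r = fderiv ℝ (Function.uncurry u) (t,r) (1,0) from hd'.deriv.symm ▸ rfl]
  exact hd'

lemma u_slice_r {t r : ℝ} (hr : 2*M < r) :
    HasDerivAt (fun s => u t s) (pdr u t r) r := by
  have hD := (uCAt hM huC 1 (p := (t,r)) hr).differentiableAt (by norm_num)
  have hline : HasDerivAt (fun s : ℝ => (t, s)) ((0:ℝ), (1:ℝ)) r :=
    (hasDerivAt_const r t).prodMk (hasDerivAt_id r)
  have hd := hD.hasFDerivAt.comp_hasDerivAt r hline
  have hd' : HasDerivAt (fun s => u t s) (fderiv ℝ (Function.uncurry u) (t,r) (0,1)) r := hd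
  rw [show pdr u t r = fderiv ℝ (Function.uncurry u) (t,r) (0,1) from hd'.deriv.symm ▸ rfl]
  exact hd'

lemma gfun_contDiffAt (n : ℕ) (p : ℝ × ℝ) :
    ContDiffAt ℝ (n : WithTop ℕ∞) (gfun M u) p := by
  have h1 : ContDiffAt ℝ (n : WithTop ℕ∞) (fun q : ℝ × ℝ => rho M q.2) p :=
    ((rho_contDiff hM n).contDiffAt).comp p contDiffAt_snd
  have h2 : ContDiffAt ℝ (n : WithTop ℕ∞) (fun q : ℝ × ℝ => (q.1, rho M q.2)) p :=
    contDiffAt_fst.prodMk h1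
  have h3 : ContDiffAt ℝ (n : WithTop ℕ∞) (Function.uncurry u) (p.1, rho M p.2) :=
    uCAt hM huC n (rho_gt hM p.2)
  have h4 := h3.comp p h2
  exact h1.mul h4

lemma g1_contDiffAt (n : ℕ) (p : ℝ × ℝ) :
    ContDiffAt ℝ (n : WithTop ℕ∞) (g1 M u) p := by
  have h := (gfun_contDiffAt hM huC (n+1) p).fderiv_right
    (m := (n : WithTop ℕ∞)) (by exact_mod_cast le_refl (n+1))
  exact h.clm_apply contDiffAt_const

lemma g2_contDiffAt (n : ℕ) (p : ℝ × ℝ) :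
    ContDiffAt ℝ (n : WithTop ℕ∞) (g2 M u) p := by
  have h := (gfun_contDiffAt hM huC (n+1) p).fderiv_right
    (m := (n : WithTop ℕ∞)) (by exact_mod_cast le_refl (n+1))
  exact h.clm_apply contDiffAt_const

/-- slice derivative of `gfun` in `t` : identification of `g1`. -/
lemma g1_eq (t x : ℝ) : g1 M u (t, x) = rho M x * pdt u t (rho M x) := by
  have hD := (gfun_contDiffAt hM huC 1 (t,x)).differentiableAt (by norm_num)
  have hline : HasDerivAt (fun s : ℝ => (s, x)) ((1:ℝ), (0:ℝ)) t :=
    (hasDerivAt_id t).prodMk (hasDerivAt_const t x)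
  have hd : HasDerivAt (fun s => gfun M u (s, x)) (g1 M u (t,x)) t :=
    by have h := hD.hasFDerivAt.comp_hasDerivAt t hline; exact h
  have hd2 : HasDerivAt (fun s => gfun M u (s, x)) (rho M x * pdt u t (rho M x)) t := by
    have := (u_slice_t hM huC (t := t) (rho_gt hM x)).const_mul (rho M x)
    exact this
  exact hd.unique hd2

/-- slice derivative of `gfun` in `x` : identification of `g2`. -/
lemma g2_eq (t x : ℝ) : g2 M u (t, x)
    = rhop M x * u t (rho M x) + rho M x * rhop M x * pdr u t (rho M x) := by
  have hD := (gfun_contDiffAt hM huC 1 (t,x)).differentiableAt (by norm_num)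
  have hline : HasDerivAt (fun s : ℝ => (t, s)) ((0:ℝ), (1:ℝ)) x :=
    (hasDerivAt_const x t).prodMk (hasDerivAt_id x)
  have hd : HasDerivAt (fun s => gfun M u (t, s)) (g2 M u (t,x)) x :=
    by have h := hD.hasFDerivAt.comp_hasDerivAt x hline; exact h
  have hrho := rho_hasDeriv hM x
  have hu2 : HasDerivAt (fun y => u t (rho M y)) (pdr u t (rho M x) * ((rho M x - 2*M)/(rho M x))) x :=
    (u_slice_r hM huC (t := t) (rho_gt hM x)).comp x hrho
  have hd2 : HasDerivAt (fun s => gfun M u (t, s))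
      ((rho M x - 2*M)/(rho M x) * u t (rho M x)
        + rho M x * (pdr u t (rho M x) * ((rho M x - 2*M)/(rho M x)))) x := by
    exact hrho.mul hu2
  have := hd.unique hd2
  rw [this, rhop]
  ring

lemma f2_eq {t r : ℝ} (hr : 2*M < r) :
    fderiv ℝ (Function.uncurry u) (t,r) (0,1) = pdr u t r := by
  have hD := (uCAt hM huC 1 (p := (t,r)) hr).differentiableAt (by norm_num)
  have hline : HasDerivAt (fun s : ℝ => (t, s)) ((0:ℝ), (1:ℝ)) r :=
    (hasDerivAt_const r t).prodMk (hasDerivAt_id r)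
  have hd : HasDerivAt (fun s => u t s) (fderiv ℝ (Function.uncurry u) (t,r) (0,1)) r :=
    by have h := hD.hasFDerivAt.comp_hasDerivAt r hline; exact h
  exact hd.unique (u_slice_r hM huC hr)

lemma pdt_eq_f1 {t r : ℝ} (hr : 2*M < r) :
    fderiv ℝ (Function.uncurry u) (t,r) (1,0) = pdt u t r := by
  have hD := (uCAt hM huC 1 (p := (t,r)) hr).differentiableAt (by norm_num)
  have hline : HasDerivAt (fun s : ℝ => (s, r)) ((1:ℝ), (0:ℝ)) t :=
    (hasDerivAt_id t).prodMk (hasDerivAt_const t r)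
  have hd : HasDerivAt (fun s => u s r) (fderiv ℝ (Function.uncurry u) (t,r) (1,0)) t :=
    by have h := hD.hasFDerivAt.comp_hasDerivAt t hline; exact h
  exact hd.unique (u_slice_t hM huC hr)

lemma pdr_slice_r {t r : ℝ} (hr : 2*M < r) :
    HasDerivAt (fun r' => pdr u t r') (pdrr u t r) r := by
  set f2' : ℝ × ℝ → ℝ := fun p => fderiv ℝ (Function.uncurry u) p (0,1) with hf2'
  have hC : ContDiffAt ℝ (1 : WithTop ℕ∞) f2' (t,r) := by
    have h := (uCAt hM huC 2 (p := (t,r)) hr).fderiv_right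
      (m := (1 : WithTop ℕ∞)) (by exact_mod_cast le_refl 2)
    exact h.clm_apply contDiffAt_const
  have hD := hC.differentiableAt (by norm_num)
  have hline : HasDerivAt (fun s : ℝ => (t, s)) ((0:ℝ), (1:ℝ)) r :=
    (hasDerivAt_const r t).prodMk (hasDerivAt_id r)
  have hd : HasDerivAt (fun s => f2' (t, s)) (fderiv ℝ f2' (t,r) (0,1)) r :=
    by have h := hD.hasFDerivAt.comp_hasDerivAt r hline; exact h
  have hev : (fun r' => pdr u t r') =ᶠ[nhds r] (fun r' => f2' (t, r')) := by
    filter_upwards [Ioi_mem_nhds hr] with r' hr'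
    exact (f2_eq hM huC hr').symm
  have hd' : HasDerivAt (fun r' => pdr u t r') (fderiv ℝ f2' (t,r) (0,1)) r :=
    hd.congr_of_eventuallyEq hev
  rw [show pdrr u t r = fderiv ℝ f2' (t,r) (0,1) from hd'.deriv.symm ▸ rfl]
  exact hd'

lemma pdt_slice_t {t r : ℝ} (hr : 2*M < r) :
    HasDerivAt (fun s => pdt u s r) (pdtt u t r) t := by
  set f1' : ℝ × ℝ → ℝ := fun p => fderiv ℝ (Function.uncurry u) p (1,0) with hf1'
  have hC : ContDiffAt ℝ (1 : WithTop ℕ∞) f1' (t,r) := by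
    have h := (uCAt hM huC 2 (p := (t,r)) hr).fderiv_right
      (m := (1 : WithTop ℕ∞)) (by exact_mod_cast le_refl 2)
    exact h.clm_apply contDiffAt_const
  have hD := hC.differentiableAt (by norm_num)
  have hline : HasDerivAt (fun s : ℝ => (s, r)) ((1:ℝ), (0:ℝ)) t :=
    (hasDerivAt_id t).prodMk (hasDerivAt_const t r)
  have hd : HasDerivAt (fun s => f1' (s, r)) (fderiv ℝ f1' (t,r) (1,0)) t :=
    by have h := hD.hasFDerivAt.comp_hasDerivAt t hline; exact h
  have heq : (fun s => pdt u s r) = (fun s => f1' (s, r)) :=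
    funext fun s => (pdt_eq_f1 hM huC (t := s) hr).symm
  have hd' : HasDerivAt (fun s => pdt u s r) (fderiv ℝ f1' (t,r) (1,0)) t := by
    rw [heq]; exact hd
  rw [show pdtt u t r = fderiv ℝ f1' (t,r) (1,0) from hd'.deriv.symm ▸ rfl]
  exact hd'

lemma g1_fderiv_t (t x : ℝ) :
    fderiv ℝ (g1 M u) (t,x) (1,0) = rho M x * pdtt u t (rho M x) := by
  have hD := (g1_contDiffAt hM huC 1 (t,x)).differentiableAt (by norm_num)
  have hline : HasDerivAt (fun s : ℝ => (s, x)) ((1:ℝ), (0:ℝ)) t :=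
    (hasDerivAt_id t).prodMk (hasDerivAt_const t x)
  have hd : HasDerivAt (fun s => g1 M u (s, x)) (fderiv ℝ (g1 M u) (t,x) (1,0)) t :=
    by have h := hD.hasFDerivAt.comp_hasDerivAt t hline; exact h
  have heq : (fun s => g1 M u (s, x)) = (fun s => rho M x * pdt u s (rho M x)) :=
    funext fun s => g1_eq hM huC s x
  have hd2 : HasDerivAt (fun s => g1 M u (s, x)) (rho M x * pdtt u t (rho M x)) t := by
    rw [heq]
    exact (pdt_slice_t hM huC (rho_gt hM x)).const_mul (rho M x)
  exact hd.unique hd2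

lemma g2_fderiv_x (t x : ℝ) :
    fderiv ℝ (g2 M u) (t,x) (0,1)
      = (2*M*((rho M x - 2*M)/(rho M x))/(rho M x)^2) * u t (rho M x)
        + (rhop M x * ((rho M x - 2*M)/(rho M x))
            + (((rho M x - 2*M)/(rho M x)) * rhop M x
               + rho M x * (2*M*((rho M x - 2*M)/(rho M x))/(rho M x)^2))) * pdr u t (rho M x)
        + (rho M x * rhop M x) * (pdrr u t (rho M x) * ((rho M x - 2*M)/(rho M x))) := by
  have hD := (g2_contDiffAt hM huC 1 (t,x)).differentiableAt (by norm_num)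
  have hline : HasDerivAt (fun s : ℝ => (t, s)) ((0:ℝ), (1:ℝ)) x :=
    (hasDerivAt_const x t).prodMk (hasDerivAt_id x)
  have hd : HasDerivAt (fun s => g2 M u (t, s)) (fderiv ℝ (g2 M u) (t,x) (0,1)) x :=
    by have h := hD.hasFDerivAt.comp_hasDerivAt x hline; exact h
  have heq : (fun s => g2 M u (t, s))
      = (fun s => rhop M s * u t (rho M s) + rho M s * rhop M s * pdr u t (rho M s)) :=
    funext fun s => g2_eq hM huC t s
  have hρ : HasDerivAt (rho M) ((rho M x - 2*M)/(rho M x)) x := rho_hasDeriv hM x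
  have hρ0 : rho M x ≠ 0 := by have := rho_gt hM x; intro h; rw [h] at this; linarith
  have hρp : HasDerivAt (rhop M) (2*M*((rho M x - 2*M)/(rho M x))/(rho M x)^2) x := by
    have h1 : HasDerivAt (fun y => rho M y - 2*M) ((rho M x - 2*M)/(rho M x)) x :=
      hρ.sub_const _
    have h2 := h1.div hρ hρ0
    have : rhop M = fun y => (rho M y - 2*M)/(rho M y) := rfl
    rw [this]
    refine h2.congr_deriv ?_
    field_simp
    ring
  have hu1 : HasDerivAt (fun y => u t (rho M y))
      (pdr u t (rho M x) * ((rho M x - 2*M)/(rho M x))) x :=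
    (u_slice_r hM huC (rho_gt hM x)).comp x hρ
  have hupdr : HasDerivAt (fun y => pdr u t (rho M y))
      (pdrr u t (rho M x) * ((rho M x - 2*M)/(rho M x))) x :=
    (pdr_slice_r hM huC (rho_gt hM x)).comp x hρ
  have hterm1 := hρp.mul hu1
  have hterm2 := (hρ.mul hρp).mul hupdr
  have hd2 := hterm1.add hterm2
  rw [heq] at hd
  have := hd.unique hd2
  rw [this, Pi.mul_apply, rhop]
  ring

lemma gsymm (p : ℝ × ℝ) :
    fderiv ℝ (g1 M u) p (0,1) = fderiv ℝ (g2 M u) p (1,0) := by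
  set g' := fderiv ℝ (gfun M u) with hg'def
  have hg'C : ContDiffAt ℝ (1 : WithTop ℕ∞) g' p :=
    (gfun_contDiffAt hM huC 2 p).fderiv_right (m := (1 : WithTop ℕ∞))
      (by exact_mod_cast le_refl 2)
  have hg' : HasFDerivAt g' (fderiv ℝ g' p) p :=
    (hg'C.differentiableAt (by norm_num)).hasFDerivAt
  have hev : ∀ᶠ y in nhds p, HasFDerivAt (gfun M u) (g' y) y := by
    filter_upwards with y
    exact ((gfun_contDiffAt hM huC 1 y).differentiableAt (by norm_num)).hasFDerivAt
  have hsym := second_derivative_symmetric_of_eventually hev hg'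
  have h1 : HasFDerivAt (g1 M u)
      ((ContinuousLinearMap.apply ℝ ℝ ((1:ℝ),(0:ℝ))).comp (fderiv ℝ g' p)) p :=
    (ContinuousLinearMap.apply ℝ ℝ ((1:ℝ),(0:ℝ))).hasFDerivAt.comp p hg'
  have h2 : HasFDerivAt (g2 M u)
      ((ContinuousLinearMap.apply ℝ ℝ ((0:ℝ),(1:ℝ))).comp (fderiv ℝ g' p)) p :=
    (ContinuousLinearMap.apply ℝ ℝ ((0:ℝ),(1:ℝ))).hasFDerivAt.comp p hg'
  rw [h1.fderiv, h2.fderiv]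
  exact hsym ((0:ℝ),(1:ℝ)) ((1:ℝ),(0:ℝ))

lemma g_cont : Continuous (gfun M u) :=
  continuous_iff_continuousAt.2 fun p => (gfun_contDiffAt hM huC 0 p).continuousAt

lemma g1_cont : Continuous (g1 M u) :=
  continuous_iff_continuousAt.2 fun p => (g1_contDiffAt hM huC 0 p).continuousAt

lemma g2_cont : Continuous (g2 M u) :=
  continuous_iff_continuousAt.2 fun p => (g2_contDiffAt hM huC 0 p).continuousAt

end Plumb

noncomputable def Vfun (M lam x : ℝ) : ℝ :=
  (1 - 2*M/(rho M x)) * (lam^2/(rho M x)^2 + 2*M/(rho M x)^3)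

section Wave
variable {M lam : ℝ} {u : ℝ → ℝ → ℝ}
  (hM : 0 < M)
  (huC : ContDiffOn ℝ ((⊤:ℕ∞) : WithTop ℕ∞) (Function.uncurry u)
    ((Set.univ : Set ℝ) ×ˢ Set.Ioi (2*M)))
  (hueq : ∀ t r : ℝ, 2*M < r →
    -(r/(r-2*M)) * pdtt u t r + ((r-2*M)/r) * pdrr u t r
      + (2*(r-M)/r^2) * pdr u t r - lam^2/r^2 * u t r = 0)

include hM huC hueq in
lemma wave_identity (t x : ℝ) :
    fderiv ℝ (g1 M u) (t,x) (1,0) - fderiv ℝ (g2 M u) (t,x) (0,1)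
      = -(Vfun M lam x) * gfun M u (t,x) := by
  rw [g1_fderiv_t hM huC, g2_fderiv_x hM huC]
  set r := rho M x with hrdef
  have hr : 2*M < r := rho_gt hM x
  have hr0 : r ≠ 0 := by intro h; rw [h] at hr; linarith
  have hr2 : r - 2*M ≠ 0 := by intro h; rw [sub_eq_zero] at h; rw [h] at hr; linarith
  have heq := hueq t r hr
  have hVg : Vfun M lam x = (1 - 2*M/r) * (lam^2/r^2 + 2*M/r^3) := rfl
  have hgf : gfun M u (t,x) = r * u t r := rfl
  have hrp : rhop M x = (r - 2*M)/r := rfl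
  rw [hVg, hgf, hrp]
  have hpdtt : pdtt u t r = (r-2*M)/r * ((r-2*M)/r * pdrr u t r
      + 2*(r-M)/r^2 * pdr u t r - lam^2/r^2 * u t r) := by
    field_simp at heq ⊢
    linarith
  rw [hpdtt]
  field_simp
  ring

end Wave

noncomputable def Gfun (M lam y : ℝ) : ℝ :=
  (-(lam^2/(rho M y)) - M/(rho M y)^2) - (-(lam^2/(2*M)) - M/(2*M)^2)

section VG
variable {M lam : ℝ} (hM : 0 < M)

include hM

lemma rho_pos (x : ℝ) : 0 < rho M x := by linarith [rho_gt hM x]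

lemma rho_ne (x : ℝ) : rho M x ≠ 0 := ne_of_gt (rho_pos hM x)

lemma V_nonneg (x : ℝ) : 0 ≤ Vfun M lam x := by
  have h1 := rho_gt hM x
  have h2 := rho_pos hM x
  apply mul_nonneg
  · have : 2*M/(rho M x) ≤ 1 := by
      rw [div_le_one h2]; linarith
    linarith
  · positivity

lemma rho_continuous : Continuous (rho M) :=
  continuous_iff_continuousAt.2 fun x => rho_continuousAt hM x

lemma V_continuous : Continuous (Vfun M lam) := by
  unfold Vfun
  have hrc := rho_continuous hM
  have hne : ∀ x, rho M x ≠ 0 := rho_ne hM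
  apply Continuous.mul
  · exact continuous_const.sub (continuous_const.div hrc hne)
  · exact ((continuous_const.div (hrc.pow 2) fun x => pow_ne_zero 2 (hne x))).add
      ((continuous_const.div (hrc.pow 3) fun x => pow_ne_zero 3 (hne x)))

lemma G_hasDeriv (y : ℝ) : HasDerivAt (Gfun M lam) (Vfun M lam y) y := by
  have hρ := rho_hasDeriv hM y
  have hne := rho_ne hM y
  have h1 : HasDerivAt (fun y => -(lam^2/(rho M y)))
      (lam^2 * ((rho M y - 2*M)/(rho M y)) / (rho M y)^2) y := by
    have := ((hasDerivAt_const y (lam^2)).div hρ hne).neg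
    refine this.congr_deriv ?_
    field_simp
    ring
  have h2 : HasDerivAt (fun y => M/(rho M y)^2)
      (-(2*M*((rho M y - 2*M)/(rho M y)) * rho M y) / (rho M y)^4) y := by
    have hpow : HasDerivAt (fun y => (rho M y)^2)
        (2 * rho M y * ((rho M y - 2*M)/(rho M y))) y := by
      have := hρ.pow 2
      refine this.congr_deriv ?_
      ring
    have := (hasDerivAt_const y M).div hpow (pow_ne_zero 2 hne)
    refine this.congr_deriv ?_
    field_simp
    ring
  have h3 := (h1.sub h2).sub_const (-(lam^2/(2*M)) - M/(2*M)^2)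
  have : Gfun M lam = fun y => (-(lam^2/(rho M y)) - M/(rho M y)^2)
      - (-(lam^2/(2*M)) - M/(2*M)^2) := rfl
  rw [this]
  refine h3.congr_deriv ?_
  unfold Vfun
  field_simp
  ring

lemma G_nonneg (y : ℝ) : 0 ≤ Gfun M lam y := by
  have h1 := rho_gt hM y
  have h2 := rho_pos hM y
  have e1 : lam^2/(rho M y) ≤ lam^2/(2*M) := by gcongr
  have e2 : M/(rho M y)^2 ≤ M/(2*M)^2 := by gcongr
  unfold Gfun
  linarith

lemma G_le_K (y : ℝ) : Gfun M lam y ≤ lam^2/(2*M) + M/(2*M)^2 := by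
  have h2 := rho_pos hM y
  have e1 : 0 ≤ lam^2/(rho M y) := by positivity
  have e2 : 0 ≤ M/(rho M y)^2 := by positivity
  unfold Gfun
  linarith

lemma rho_sub_eq_exp (y : ℝ) :
    rho M y - 2*M = Real.exp ((y - rho M y)/(2*M)) := by
  have h1 := rho_gt hM y
  have h2 := rho_rstar hM y
  have hlog : Real.log (rho M y - 2*M) = (y - rho M y)/(2*M) := by
    unfold rstar' rstar at h2
    field_simp
    linarith
  rw [← hlog, Real.exp_log (by linarith)]

lemma G_le_exp (y : ℝ) :
    Gfun M lam y ≤ (lam^2+1)/(4*M^2) * Real.exp ((1/(2*M)) * y) := by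
  have h1 := rho_gt hM y
  have h2 := rho_pos hM y
  set r := rho M y with hr
  have key : Gfun M lam y ≤ (r - 2*M) * ((lam^2+1)/(4*M^2)) := by
    have e1 : lam^2/(2*M) - lam^2/r = lam^2 * (r - 2*M)/(2*M*r) := by
      field_simp
    have e2 : M/(2*M)^2 - M/r^2 = M*(r-2*M)*(r+2*M)/((2*M)^2*r^2) := by
      field_simp; ring
    have b1 : lam^2 * (r - 2*M)/(2*M*r) ≤ lam^2 * (r - 2*M)/(2*M*(2*M)) := by
      apply div_le_div_of_nonneg_left (by nlinarith [sq_nonneg lam] : (0:ℝ) ≤ lam^2 * (r - 2*M))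
        (by positivity) (by nlinarith)
    have b2 : M*(r-2*M)*(r+2*M)/((2*M)^2*r^2) ≤ M*(r-2*M)*(2*r)/((2*M)^2*(2*M)*r) := by
      rw [div_le_div_iff₀ (by positivity) (by positivity)]
      have hfrac : (0:ℝ) ≤ 2*r*r - (r+2*M)*(2*M) := by
        nlinarith [mul_nonneg (sub_nonneg.2 h1.le) (by linarith : (0:ℝ) ≤ 2*r + 2*M)]
      nlinarith [mul_nonneg (mul_nonneg (mul_nonneg (mul_nonneg hM.le
        (sub_nonneg.2 h1.le)) (by positivity : (0:ℝ) ≤ (2*M)^2)) h2.le) hfrac]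
    have hGeq : Gfun M lam y = lam^2 * (r - 2*M)/(2*M*r) + M*(r-2*M)*(r+2*M)/((2*M)^2*r^2) := by
      unfold Gfun
      rw [← e1, ← e2]
      ring
    rw [hGeq]
    have c1 : lam^2 * (r - 2*M)/(2*M*(2*M)) = (r-2*M) * (lam^2/(4*M^2)) := by
      field_simp; ring
    have c2 : M*(r-2*M)*(2*r)/((2*M)^2*(2*M)*r) = (r-2*M) * (1/(4*M^2)) := by
      field_simp; ring
    calc lam^2 * (r - 2*M)/(2*M*r) + M*(r-2*M)*(r+2*M)/((2*M)^2*r^2)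
        ≤ lam^2 * (r - 2*M)/(2*M*(2*M)) + M*(r-2*M)*(2*r)/((2*M)^2*(2*M)*r) := by
          linarith
      _ = (r - 2*M) * ((lam^2+1)/(4*M^2)) := by rw [c1, c2]; ring
  have hexp : r - 2*M ≤ Real.exp ((1/(2*M)) * y) := by
    rw [rho_sub_eq_exp hM y]
    apply Real.exp_le_exp.2
    rw [div_le_iff₀ (by linarith : (0:ℝ) < 2*M)]
    have : (1/(2*M)) * y * (2*M) = y := by field_simp
    rw [this]
    linarith
  calc Gfun M lam y ≤ (r - 2*M) * ((lam^2+1)/(4*M^2)) := key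
    _ ≤ Real.exp ((1/(2*M)) * y) * ((lam^2+1)/(4*M^2)) := by
        apply mul_le_mul_of_nonneg_right hexp
        positivity
    _ = (lam^2+1)/(4*M^2) * Real.exp ((1/(2*M)) * y) := by ring

end VG

noncomputable def etaf (M : ℝ) (u : ℝ → ℝ → ℝ) (a b : ℝ) : ℝ :=
  gfun M u ((a+b)/2, (a-b)/2)
noncomputable def Af (M : ℝ) (u : ℝ → ℝ → ℝ) (a b : ℝ) : ℝ :=
  (g1 M u ((a+b)/2, (a-b)/2) + g2 M u ((a+b)/2, (a-b)/2))/2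
noncomputable def Bf (M : ℝ) (u : ℝ → ℝ → ℝ) (a b : ℝ) : ℝ :=
  (g1 M u ((a+b)/2, (a-b)/2) - g2 M u ((a+b)/2, (a-b)/2))/2
noncomputable def chif (M : ℝ) (u : ℝ → ℝ → ℝ) (y : ℝ) : ℝ := g1 M u (0, y)

section ABlemmas
variable {M lam : ℝ} {u : ℝ → ℝ → ℝ}
  (hM : 0 < M)
  (huC : ContDiffOn ℝ ((⊤:ℕ∞) : WithTop ℕ∞) (Function.uncurry u)
    ((Set.univ : Set ℝ) ×ˢ Set.Ioi (2*M)))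

include hM huC

lemma vec_decomp (s t : ℝ) : ((s, t) : ℝ × ℝ) = s • ((1:ℝ),(0:ℝ)) + t • ((0:ℝ),(1:ℝ)) := by
  simp [Prod.ext_iff]

lemma eta_hasDeriv_a (b a : ℝ) :
    HasDerivAt (fun a' => etaf M u a' b) (Af M u a b) a := by
  set p : ℝ × ℝ := ((a+b)/2, (a-b)/2) with hp
  have hgd := ((gfun_contDiffAt hM huC 1 p).differentiableAt (by norm_num)).hasFDerivAt
  have hline : HasDerivAt (fun a' : ℝ => (((a'+b)/2 : ℝ), ((a'-b)/2 : ℝ)))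
      (((1:ℝ)/2), ((1:ℝ)/2)) a :=
    (((hasDerivAt_id a).add_const b).div_const 2).prodMk
      (((hasDerivAt_id a).sub_const b).div_const 2)
  have hcomp := hgd.comp_hasDerivAt a hline
  have hval : fderiv ℝ (gfun M u) p (((1:ℝ)/2), ((1:ℝ)/2)) = Af M u a b := by
    rw [vec_decomp hM huC ((1:ℝ)/2) ((1:ℝ)/2), map_add, _root_.map_smul, _root_.map_smul]
    show ((1:ℝ)/2) • g1 M u p + ((1:ℝ)/2) • g2 M u p = Af M u a b
    rw [Af, smul_eq_mul, smul_eq_mul, ← hp]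
    ring
  rw [← hval]
  exact hcomp

lemma B_hasDeriv_a (hueq : ∀ t r : ℝ, 2*M < r →
      -(r/(r-2*M)) * pdtt u t r + ((r-2*M)/r) * pdrr u t r
        + (2*(r-M)/r^2) * pdr u t r - lam^2/r^2 * u t r = 0)
    (b a : ℝ) :
    HasDerivAt (fun a' => Bf M u a' b)
      (-(1/4) * Vfun M lam ((a-b)/2) * etaf M u a b) a := by
  set p : ℝ × ℝ := ((a+b)/2, (a-b)/2) with hp
  have h1d := ((g1_contDiffAt hM huC 1 p).differentiableAt (by norm_num)).hasFDerivAt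
  have h2d := ((g2_contDiffAt hM huC 1 p).differentiableAt (by norm_num)).hasFDerivAt
  have hline : HasDerivAt (fun a' : ℝ => (((a'+b)/2 : ℝ), ((a'-b)/2 : ℝ)))
      (((1:ℝ)/2), ((1:ℝ)/2)) a :=
    (((hasDerivAt_id a).add_const b).div_const 2).prodMk
      (((hasDerivAt_id a).sub_const b).div_const 2)
  have hc1 := h1d.comp_hasDerivAt a hline
  have hc2 := h2d.comp_hasDerivAt a hline
  have hcomp := (hc1.sub hc2).div_const 2
  have hval : (fderiv ℝ (g1 M u) p (((1:ℝ)/2), ((1:ℝ)/2))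
      - fderiv ℝ (g2 M u) p (((1:ℝ)/2), ((1:ℝ)/2)))/2
      = -(1/4) * Vfun M lam ((a-b)/2) * etaf M u a b := by
    rw [vec_decomp hM huC ((1:ℝ)/2) ((1:ℝ)/2), map_add, _root_.map_smul, _root_.map_smul,
      map_add, _root_.map_smul, _root_.map_smul]
    have hsy := gsymm hM huC p
    have hwv := wave_identity hM huC hueq ((a+b)/2) ((a-b)/2)
    rw [← hp] at hwv
    have heta : etaf M u a b = gfun M u p := rfl
    rw [heta]
    simp only [smul_eq_mul]
    linarith [hwv, hsy]
  rw [← hval]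
  exact hcomp

lemma A_hasDeriv_b (hueq : ∀ t r : ℝ, 2*M < r →
      -(r/(r-2*M)) * pdtt u t r + ((r-2*M)/r) * pdrr u t r
        + (2*(r-M)/r^2) * pdr u t r - lam^2/r^2 * u t r = 0)
    (a b : ℝ) :
    HasDerivAt (fun b' => Af M u a b')
      (-(1/4) * Vfun M lam ((a-b)/2) * etaf M u a b) b := by
  set p : ℝ × ℝ := ((a+b)/2, (a-b)/2) with hp
  have h1d := ((g1_contDiffAt hM huC 1 p).differentiableAt (by norm_num)).hasFDerivAt
  have h2d := ((g2_contDiffAt hM huC 1 p).differentiableAt (by norm_num)).hasFDerivAt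
  have hline : HasDerivAt (fun b' : ℝ => (((a+b')/2 : ℝ), ((a-b')/2 : ℝ)))
      (((1:ℝ)/2), (-(1:ℝ)/2)) b := by
    apply HasDerivAt.prodMk
    · have := ((hasDerivAt_const b a).add (hasDerivAt_id b)).div_const 2
      simpa using this
    · have := ((hasDerivAt_const b a).sub (hasDerivAt_id b)).div_const 2
      norm_num at this
      refine this.congr_deriv ?_
      norm_num
  have hc1 := h1d.comp_hasDerivAt b hline
  have hc2 := h2d.comp_hasDerivAt b hline
  have hcomp := (hc1.add hc2).div_const 2
  have hval : (fderiv ℝ (g1 M u) p (((1:ℝ)/2), (-(1:ℝ)/2))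
      + fderiv ℝ (g2 M u) p (((1:ℝ)/2), (-(1:ℝ)/2)))/2
      = -(1/4) * Vfun M lam ((a-b)/2) * etaf M u a b := by
    rw [vec_decomp hM huC ((1:ℝ)/2) (-(1:ℝ)/2), map_add, _root_.map_smul, _root_.map_smul,
      map_add, _root_.map_smul, _root_.map_smul]
    have hsy := gsymm hM huC p
    have hwv := wave_identity hM huC hueq ((a+b)/2) ((a-b)/2)
    rw [← hp] at hwv
    have heta : etaf M u a b = gfun M u p := rfl
    rw [heta]
    simp only [smul_eq_mul]
    linarith [hwv, hsy]
  rw [← hval]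
  exact hcomp

end ABlemmas


/-- Event-horizon half of Corollary 1.4 (single mode): for data `(0, ψ)` with `ψ` smooth
and compactly supported in `(2M,∞)`, if the forward radiation field at the event horizon
vanishes identically, then `ψ ≡ 0` on `(2M,∞)`. -/
theorem vanishing_radiation_field_event_horizon
    (M lam : ℝ) (hM : 0 < M) (hlam : 0 ≤ lam)
    (u : ℝ → ℝ → ℝ) (hu : IsModeSolution M lam u)
    (ψ : ℝ → ℝ) (hφ : ∀ r : ℝ, 2*M < r → u 0 r = 0) (hψ : ∀ r : ℝ, ψ r = pdt u 0 r)
    (hsupp : ∃ r₁ r₂ : ℝ, 2*M < r₁ ∧ r₁ ≤ r₂ ∧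
      ∀ r : ℝ, 2*M < r → r ∉ Set.Icc r₁ r₂ → ψ r = 0)
    (hf : IsFwdRadHorizon M u (fun _ => 0)) :
    ∀ r : ℝ, 2*M < r → ψ r = 0 := by
  obtain ⟨r₁, r₂, hr₁, hr₁₂, hss⟩ := hsupp
  have huC : ContDiffOn ℝ ((⊤:ℕ∞) : WithTop ℕ∞) (Function.uncurry u)
      ((Set.univ : Set ℝ) ×ˢ Set.Ioi (2*M)) := hu.1
  have hueq := hu.2
  have hr₂ : 2*M < r₂ := by linarith
  set x₁ := rstar M r₁ with hx₁
  set x₂ := rstar M r₂ with hx₂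
  -- the data function χ
  have hchi_eq : ∀ y, chif M u y = rho M y * ψ (rho M y) := by
    intro y
    rw [chif, g1_eq hM huC 0 y, hψ (rho M y)]
  have hchi_zero : ∀ y, y < x₁ ∨ x₂ < y → chif M u y = 0 := by
    intro y hy
    rw [hchi_eq y]
    have hρ := rho_gt hM y
    have hz : ψ (rho M y) = 0 := by
      apply hss _ hρ
      intro hmem
      rcases hy with h | h
      · have hlt : rho M y < r₁ := (rho_lt_iff hM hr₁).mpr h
        exact absurd hmem.1 (by linarith)
      · have hlt : r₂ < rho M y := (lt_rho_iff hM hr₂).mpr h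
        exact absurd hmem.2 (by linarith)
    rw [hz, mul_zero]
  have hchic : Continuous (chif M u) :=
    (g1_cont hM huC).comp (continuous_const.prodMk continuous_id)
  have hx₁₂ : x₁ ≤ x₂ := by
    rcases eq_or_lt_of_le hr₁₂ with h | h
    · rw [hx₁, hx₂, h]
    · exact le_of_lt ((rstar_strictMonoOn hM) hr₁ hr₂ h)
  set c₁ : ℝ := (∫ y in (x₁-1)..(x₂+1), |chif M u y|)/2 with hc₁def
  have hc₁ : 0 ≤ c₁ := by
    apply div_nonneg _ (by norm_num)
    apply intervalIntegral.integral_nonneg (by linarith) (fun y _ => abs_nonneg _)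
  have hCa : ∀ p q : ℝ, |∫ y in p..q, chif M u y / 2| ≤ c₁ :=
    chi_clip hchic hx₁₂ hchi_zero
  -- g2 vanishes on the initial slice
  have hpdr0 : ∀ y : ℝ, pdr u 0 (rho M y) = 0 := by
    intro y
    have hρ := rho_gt hM y
    have hev : (fun s => u 0 s) =ᶠ[nhds (rho M y)] (fun _ => (0:ℝ)) := by
      filter_upwards [Ioi_mem_nhds hρ] with s hs using hφ s hs
    rw [pdr, hev.deriv_eq, deriv_const]
  have hg20 : ∀ a : ℝ, g2 M u (0, a) = 0 := by
    intro a
    rw [g2_eq hM huC, hφ _ (rho_gt hM a), hpdr0 a]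
    ring
  have hpt0 : ∀ a : ℝ, (((a + -a)/2 : ℝ), ((a - -a)/2 : ℝ)) = ((0:ℝ), a) := by
    intro a
    rw [Prod.ext_iff]
    constructor <;> norm_num
  -- initial data hypotheses for the core theorem
  have hdata : ∀ a : ℝ, etaf M u a (-a) = 0 := by
    intro a
    rw [etaf, hpt0 a]
    show rho M a * u 0 (rho M a) = 0
    rw [hφ _ (rho_gt hM a), mul_zero]
  have hA0 : ∀ a : ℝ, Af M u a (-a) = chif M u a / 2 := by
    intro a
    rw [Af, hpt0 a, hg20 a, chif]
    ring
  have hB0 : ∀ a : ℝ, Bf M u a (-a) = chif M u a / 2 := by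
    intro a
    rw [Bf, hpt0 a, hg20 a, chif]
    ring
  -- the radiation-field hypothesis
  have hrad : ∀ a : ℝ, Tendsto (fun b => Af M u a b + Bf M u a b) atTop (nhds 0) := by
    intro a
    have h1 : Tendsto (fun b : ℝ => (a-b)/2) atTop atBot := by
      have h2 : Tendsto (fun b : ℝ => a - b) atTop atBot :=
        tendsto_atBot_add_const_left _ a tendsto_neg_atTop_atBot
      have h3 := h2.atBot_mul_const (show (0:ℝ) < 1/2 by norm_num)
      apply h3.congr'
      filter_upwards with x
      ring
    have h2 : Tendsto (fun b : ℝ => rho M ((a-b)/2)) atTop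
        (nhdsWithin (2*M) (Set.Ioi (2*M))) := (rho_tendsto_atBot hM).comp h1
    have h3 : Tendsto (fun b : ℝ =>
        pdt u (a - rstar M (rho M ((a-b)/2))) (rho M ((a-b)/2))) atTop (nhds 0) := by
      have := (hf a).comp h2
      exact this
    have h4 : Tendsto (fun b : ℝ => rho M ((a-b)/2)) atTop (nhds (2*M)) :=
      h2.mono_right nhdsWithin_le_nhds
    have h5 := h4.mul h3
    rw [mul_zero] at h5
    apply h5.congr
    intro b
    have hrr : rstar M (rho M ((a-b)/2)) = (a-b)/2 := rho_rstar hM ((a-b)/2)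
    rw [hrr]
    have hAB : Af M u a b + Bf M u a b = g1 M u ((a+b)/2, (a-b)/2) := by
      rw [Af, Bf]; ring
    rw [hAB, g1_eq hM huC]
    have : a - (a-b)/2 = (a+b)/2 := by ring
    rw [this]
  -- apply the core theorem
  have hcore := wave1d_core (η := etaf M u) (A := Af M u) (B := Bf M u)
    (V := Vfun M lam) (G := Gfun M lam) (χ := chif M u)
    (c := (lam^2+1)/(4*M^2)) (κ := 1/(2*M)) (K := lam^2/(2*M) + M/(2*M)^2)
    (c₁ := c₁) (x₁ := x₁)
    (eta_hasDeriv_a hM huC)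
    (A_hasDeriv_b hM huC hueq)
    (B_hasDeriv_a hM huC hueq)
    ((g_cont hM huC).comp (by fun_prop))
    (by
      have h1 := g1_cont hM huC
      have h2 := g2_cont hM huC
      apply Continuous.div_const
      exact ((h1.comp (by fun_prop)).add (h2.comp (by fun_prop))))
    (V_continuous hM) hchic (V_nonneg hM)
    (G_hasDeriv hM) (G_nonneg hM) (G_le_K hM) (G_le_exp hM)
    (by positivity) (by positivity)
    hdata hA0 hB0
    (fun y hy => hchi_zero y (Or.inl hy))
    hc₁ hCa hrad
  -- extract the conclusion
  intro r hr
  have huzero : ∀ s : ℝ, 0 ≤ s → u s r = 0 := by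
    intro s hs
    have h := hcore (s + rstar M r) (s - rstar M r) (by linarith)
    rw [etaf] at h
    have hpt : ((((s + rstar M r) + (s - rstar M r))/2 : ℝ),
        (((s + rstar M r) - (s - rstar M r))/2 : ℝ)) = (s, rstar M r) := by
      rw [Prod.ext_iff]
      refine ⟨by ring_nf, by ring_nf⟩
    rw [hpt] at h
    have hρ : rho M (rstar M r) = r := rstar_rho hM hr
    have hg : gfun M u (s, rstar M r) = rho M (rstar M r) * u s (rho M (rstar M r)) := rfl
    rw [hg, hρ] at h
    have hr0 : r ≠ 0 := by intro h0; rw [h0] at hr; linarith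
    exact (mul_eq_zero.mp h).resolve_left hr0
  have hd := u_slice_t hM huC (t := 0) hr
  have hW : HasDerivWithinAt (fun s => u s r) (pdt u 0 r) (Set.Ici 0) 0 :=
    hd.hasDerivWithinAt
  have hZ : HasDerivWithinAt (fun s => u s r) 0 (Set.Ici 0) 0 := by
    apply (hasDerivWithinAt_const (0:ℝ) (Set.Ici 0) (0:ℝ)).congr
    · intro y hy; exact huzero y hy
    · exact huzero 0 le_rfl
  have h1 := hW.derivWithin (uniqueDiffOn_Ici 0 0 Set.self_mem_Ici)
  have h2 := hZ.derivWithin (uniqueDiffOn_Ici 0 0 Set.self_mem_Ici)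
  rw [hψ r, ← h1, h2]
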